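/- arXiv:0907.0528 — 5 statements merged into one kernel-verified Lean document; each statement's English description precedes it below -/
import Mathlib

section
/- Two shift-invariant probability measures on a subshift X that both satisfy the Gibbs inequality for the same continuous potential ψ (possibly with different constants C and the same pressure P) are mutually absolutely continuous; consequently, there is at most one shift-invariant ergodic probability measure satisfying the Gibbs inequality for ψ. -/
open MeasureTheory Filter Topology
open scoped ENNReal

attribute [local instance] Classical.propDecidable

noncomputable section

/-- The shift map on one-sided sequences. -/
def shiftSeq {A : Type*} : (ℕ → A) → (ℕ → A) := fun a n => a (n + 1)

/-- The cylinder set of a finite word. -/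
def cyl {A : Type*} {n : ℕ} (w : Fin n → A) : Set (ℕ → A) := {a | ∀ i : Fin n, a (i : ℕ) = w i}

/-- Birkhoff sum `S_n ψ`. -/
def birk {A : Type*} (ψ : (ℕ → A) → ℝ) (n : ℕ) (a : ℕ → A) : ℝ :=
  ∑ k ∈ Finset.range n, ψ (shiftSeq^[k] a)

/-- `ψ` is an `(r+1)`-symbol potential: it depends only on coordinates `0,…,r`. -/
def IsLocConst {A : Type*} (r : ℕ) (ψ : (ℕ → A) → ℝ) : Prop :=
  ∀ a b : ℕ → A, (∀ i ≤ r, a i = b i) → ψ a = ψ b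

/-- `n`-th variation of a potential. -/
def varPot {A : Type*} (n : ℕ) (ψ : (ℕ → A) → ℝ) : ℝ :=
  sSup {x | ∃ a b : ℕ → A, (∀ i ≤ n, a i = b i) ∧ x = |ψ a - ψ b|}

/-- Gibbs inequality on the full shift, with pressure `P` and constant `C`. -/
def IsGibbsFull {A : Type*} [MeasurableSpace A] (μ : Measure (ℕ → A))
    (ψ : (ℕ → A) → ℝ) (P C : ℝ) : Prop :=
  ∀ (n : ℕ) (a : ℕ → A),
    Real.exp (birk ψ (n + 1) a - (n + 1) * P) / C
        ≤ (μ (cyl (fun i : Fin (n + 1) => a i))).toReal ∧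
    (μ (cyl (fun i : Fin (n + 1) => a i))).toReal
        ≤ C * Real.exp (birk ψ (n + 1) a - (n + 1) * P)

/-- Gibbs inequality on a subshift `X`, with pressure `P` and constant `C`. -/
def IsGibbsOn {A : Type*} [MeasurableSpace A] (X : Set (ℕ → A)) (μ : Measure (ℕ → A))
    (ψ : (ℕ → A) → ℝ) (P C : ℝ) : Prop :=
  ∀ (n : ℕ), ∀ a ∈ X,
    Real.exp (birk ψ (n + 1) a - (n + 1) * P) / C
        ≤ (μ (X ∩ cyl (fun i : Fin (n + 1) => a i))).toReal ∧
    (μ (X ∩ cyl (fun i : Fin (n + 1) => a i))).toReal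
        ≤ C * Real.exp (birk ψ (n + 1) a - (n + 1) * P)


section GibbsAux

variable {A : Type*} [Fintype A] [TopologicalSpace A] [DiscreteTopology A]
    [MeasurableSpace A] [BorelSpace A]

lemma shiftSeq_continuous : Continuous (shiftSeq (A := A)) :=
  continuous_pi fun n => continuous_apply (n + 1)

lemma shiftSeq_measurable : Measurable (shiftSeq (A := A)) :=
  shiftSeq_continuous.measurable

lemma cyl_isOpen {n : ℕ} (w : Fin n → A) : IsOpen (cyl w) := by
  have : cyl w = ⋂ i : Fin n, (fun a : ℕ → A => a (i : ℕ)) ⁻¹' {w i} := by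
    ext a; simp [cyl, Set.mem_iInter]
  rw [this]
  exact isOpen_iInter_of_finite fun i =>
    (isOpen_discrete {w i}).preimage (continuous_apply _)

lemma cyl_measurable {n : ℕ} (w : Fin n → A) : MeasurableSet (cyl w) :=
  (cyl_isOpen w).measurableSet

lemma cyl_disjoint {n : ℕ} {w v : Fin n → A} (h : w ≠ v) : Disjoint (cyl w) (cyl v) := by
  rw [Set.disjoint_left]
  intro a haw hav
  exact h (funext fun i => (haw i).symm.trans (hav i))

/-- Comparison of two Gibbs measures on all sets. -/
lemma gibbs_measure_le (X : Set (ℕ → A)) (hXcl : IsClosed X)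
    (ψ : (ℕ → A) → ℝ) (P : ℝ) (μ₁ μ₂ : Measure (ℕ → A))
    (hμ₁p : IsProbabilityMeasure μ₁) (hμ₂p : IsProbabilityMeasure μ₂)
    (hμ₁X : μ₁ X = 1) (hμ₂X : μ₂ X = 1)
    (C₁ C₂ : ℝ) (hC₁ : 1 ≤ C₁) (hC₂ : 1 ≤ C₂)
    (hG₁ : IsGibbsOn X μ₁ ψ P C₁) (hG₂ : IsGibbsOn X μ₂ ψ P C₂) :
    ∀ s : Set (ℕ → A), μ₁ s ≤ ENNReal.ofReal (C₁ * C₂) * μ₂ s := by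
  haveI := hμ₁p; haveI := hμ₂p
  set c : ℝ≥0∞ := ENNReal.ofReal (C₁ * C₂) with hc
  have hC₁0 : (0:ℝ) < C₁ := lt_of_lt_of_le one_pos hC₁
  have hC₂0 : (0:ℝ) < C₂ := lt_of_lt_of_le one_pos hC₂
  have hc0 : c ≠ 0 := by
    simp only [hc, ne_eq, ENNReal.ofReal_eq_zero, not_le]
    positivity
  have hctop : c ≠ ∞ := ENNReal.ofReal_ne_top
  have hXm : MeasurableSet X := hXcl.measurableSet
  have hX₁c : μ₁ Xᶜ = 0 := by
    have h := measure_compl hXm (measure_ne_top μ₁ X)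
    rw [hμ₁X, measure_univ] at h
    simpa using h
  -- Step 1: comparison on cylinders
  have key : ∀ (n : ℕ) (w : Fin (n + 1) → A),
      μ₁ (X ∩ cyl w) ≤ c * μ₂ (X ∩ cyl w) := by
    intro n w
    rcases (X ∩ cyl w).eq_empty_or_nonempty with h | ⟨a, haX, haw⟩
    · simp [h]
    · have hww : (fun i : Fin (n + 1) => a (i : ℕ)) = w := funext fun i => haw i
      obtain ⟨-, h1⟩ := hG₁ n a haX
      obtain ⟨h2, -⟩ := hG₂ n a haX
      rw [hww] at h1 h2
      set E := Real.exp (birk ψ (n + 1) a - (n + 1) * P) with hE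
      have hEpos : 0 < E := Real.exp_pos _
      have hreal : (μ₁ (X ∩ cyl w)).toReal ≤ C₁ * C₂ * (μ₂ (X ∩ cyl w)).toReal := by
        have h2' : E ≤ C₂ * (μ₂ (X ∩ cyl w)).toReal := by
          rw [div_le_iff₀ hC₂0] at h2
          linarith [h2]
        nlinarith [h1, h2']
      calc μ₁ (X ∩ cyl w) = ENNReal.ofReal (μ₁ (X ∩ cyl w)).toReal :=
            (ENNReal.ofReal_toReal (measure_ne_top _ _)).symm
        _ ≤ ENNReal.ofReal (C₁ * C₂ * (μ₂ (X ∩ cyl w)).toReal) :=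
            ENNReal.ofReal_le_ofReal hreal
        _ = c * μ₂ (X ∩ cyl w) := by
            rw [ENNReal.ofReal_mul (by positivity),
              ENNReal.ofReal_toReal (measure_ne_top _ _)]
  -- Step 2: comparison on open sets
  have open_le : ∀ U : Set (ℕ → A), IsOpen U → μ₁ U ≤ c * μ₂ U := by
    intro U hU
    refine le_of_forall_lt fun r hr => ?_
    obtain ⟨K, hKU, hKc, hrK⟩ := MeasureTheory.Measure.Regular.innerRegular hU r hr
    refine lt_of_lt_of_le hrK (le_trans ?_ le_rfl)
    -- cover K by cylinders inside U
    have hcov : ∀ x ∈ U, ∃ n : ℕ, cyl (fun i : Fin (n + 1) => x (i : ℕ)) ⊆ U := by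
      intro x hx
      obtain ⟨I, u, hI, hsub⟩ := isOpen_pi_iff.1 hU x hx
      refine ⟨I.sup id, fun y hy => hsub ?_⟩
      intro i hi
      have hiN : i < I.sup id + 1 :=
        Nat.lt_succ_of_le (Finset.le_sup (f := id) hi)
      have : y i = x i := hy ⟨i, hiN⟩
      rw [this]
      exact (hI i hi).2
    choose! nn hnn using hcov
    have hnbhd : ∀ x ∈ K,
        cyl (fun i : Fin (nn x + 1) => x (i : ℕ)) ∈ nhds x := fun x _ =>
      (cyl_isOpen _).mem_nhds (fun i => rfl)
    obtain ⟨t, htK, htcov⟩ := hKc.elim_nhds_subcover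
      (fun x => cyl (fun i : Fin (nn x + 1) => x (i : ℕ))) hnbhd
    set N : ℕ := t.sup nn + 1 with hN
    set W : Finset (Fin N → A) := Finset.univ.filter
      (fun w => ∃ x ∈ t, cyl w ⊆ cyl (fun i : Fin (nn x + 1) => x (i : ℕ))) with hW
    have hKW : K ⊆ ⋃ w ∈ W, cyl w := by
      intro y hy
      obtain ⟨x, hxt, hyx⟩ := Set.mem_iUnion₂.1 (htcov hy)
      have hsubc : cyl (fun i : Fin N => y (i : ℕ))
          ⊆ cyl (fun i : Fin (nn x + 1) => x (i : ℕ)) := by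
        intro z hz i
        have hiN : (i : ℕ) < N := by
          have : (i : ℕ) < nn x + 1 := i.2
          have hle : nn x ≤ t.sup nn := Finset.le_sup (f := nn) hxt
          omega
        have h1 : z (i : ℕ) = y (i : ℕ) := hz ⟨(i : ℕ), hiN⟩
        rw [h1]
        exact hyx i
      refine Set.mem_iUnion₂.2 ⟨fun i : Fin N => y (i : ℕ), ?_, fun i => rfl⟩
      simp only [hW, Finset.mem_filter, Finset.mem_univ, true_and]
      exact ⟨x, hxt, hsubc⟩
    have hWU : ∀ w ∈ W, cyl w ⊆ U := by
      intro w hw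
      simp only [hW, Finset.mem_filter, Finset.mem_univ, true_and] at hw
      obtain ⟨x, hxt, hsub⟩ := hw
      exact hsub.trans (hnn x (hKU (htK x hxt)))
    have hμ₁full : ∀ s : Set (ℕ → A), μ₁ (X ∩ s) = μ₁ s := by
      intro s
      rw [Set.inter_comm]
      exact measure_inter_conull hX₁c
    have hNsucc : ∀ w : Fin N → A, μ₁ (X ∩ cyl w) ≤ c * μ₂ (X ∩ cyl w) := by
      intro w
      exact key (t.sup nn) w
    calc μ₁ K ≤ μ₁ (⋃ w ∈ W, cyl w) := measure_mono hKW
      _ ≤ ∑ w ∈ W, μ₁ (cyl w) := measure_biUnion_finset_le W _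
      _ = ∑ w ∈ W, μ₁ (X ∩ cyl w) := by
          refine Finset.sum_congr rfl fun w _ => ?_
          rw [hμ₁full]
      _ ≤ ∑ w ∈ W, c * μ₂ (X ∩ cyl w) :=
          Finset.sum_le_sum fun w _ => hNsucc w
      _ = c * ∑ w ∈ W, μ₂ (X ∩ cyl w) := by rw [Finset.mul_sum]
      _ = c * μ₂ (⋃ w ∈ W, X ∩ cyl w) := by
          rw [measure_biUnion_finset ?_ (fun w _ => hXm.inter (cyl_measurable w))]
          intro w hw v hv hwv
          exact (cyl_disjoint hwv).mono Set.inter_subset_right Set.inter_subset_right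
      _ ≤ c * μ₂ U := by
          refine mul_le_mul_right (measure_mono ?_) c
          refine Set.iUnion₂_subset fun w hw => ?_
          exact Set.inter_subset_right.trans (hWU w hw)
  -- Step 3: all sets, via outer regularity of μ₂
  intro s
  by_contra hlt
  push_neg at hlt
  have hdiv : μ₂ s < μ₁ s / c := by
    rw [ENNReal.lt_div_iff_mul_lt (Or.inl hc0) (Or.inl hctop), mul_comm]
    exact hlt
  obtain ⟨U, hsU, hUopen, hU2⟩ := Set.exists_isOpen_lt_of_lt s _ hdiv
  have : μ₁ s < μ₁ s :=
    calc μ₁ s ≤ μ₁ U := measure_mono hsU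
      _ ≤ c * μ₂ U := open_le U hUopen
      _ < μ₁ s := ENNReal.mul_lt_of_lt_div' hU2
  exact lt_irrefl _ this

/-- The pullback σ-algebra under the shift. -/
def shiftComap (A : Type*) [MeasurableSpace A] : MeasurableSpace (ℕ → A) :=
  MeasurableSpace.comap shiftSeq MeasurableSpace.pi

end GibbsAux

/-- two Gibbs measures for the same potential (same pressure, possibly different
constants) are mutually absolutely continuous; hence at most one such measure is ergodic. -/
theorem gibbs_mutually_ac_and_unique_ergodic {A : Type*} [Fintype A] [TopologicalSpace A]
    [DiscreteTopology A] [MeasurableSpace A] [BorelSpace A]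
    (X : Set (ℕ → A)) (hXcl : IsClosed X) (hXinv : Set.MapsTo shiftSeq X X)
    (ψ : (ℕ → A) → ℝ) (hψ : ContinuousOn ψ X) (P : ℝ)
    (μ₁ μ₂ : Measure (ℕ → A))
    (hμ₁p : IsProbabilityMeasure μ₁) (hμ₂p : IsProbabilityMeasure μ₂)
    (hμ₁X : μ₁ X = 1) (hμ₂X : μ₂ X = 1)
    (hμ₁inv : MeasurePreserving shiftSeq μ₁ μ₁) (hμ₂inv : MeasurePreserving shiftSeq μ₂ μ₂)
    (C₁ C₂ : ℝ) (hC₁ : 1 ≤ C₁) (hC₂ : 1 ≤ C₂)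
    (hG₁ : IsGibbsOn X μ₁ ψ P C₁) (hG₂ : IsGibbsOn X μ₂ ψ P C₂) :
    (μ₁ ≪ μ₂ ∧ μ₂ ≪ μ₁) ∧
    (Ergodic shiftSeq μ₁ → Ergodic shiftSeq μ₂ → μ₁ = μ₂) := by
  haveI := hμ₁p; haveI := hμ₂p
  have hle12 := gibbs_measure_le X hXcl ψ P μ₁ μ₂ hμ₁p hμ₂p hμ₁X hμ₂X C₁ C₂ hC₁ hC₂ hG₁ hG₂
  have hle21 := gibbs_measure_le X hXcl ψ P μ₂ μ₁ hμ₂p hμ₁p hμ₂X hμ₁X C₂ C₁ hC₂ hC₁ hG₂ hG₁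
  have hac12 : μ₁ ≪ μ₂ := by
    intro s hs
    have := hle12 s
    rw [hs, mul_zero] at this
    exact le_antisymm this zero_le
  have hac21 : μ₂ ≪ μ₁ := by
    intro s hs
    have := hle21 s
    rw [hs, mul_zero] at this
    exact le_antisymm this zero_le
  refine ⟨⟨hac12, hac21⟩, fun h₁ h₂ => ?_⟩
  -- Uniqueness: the Radon–Nikodym derivative is a.e. invariant, hence a.e. constant.
  set T : (ℕ → A) → (ℕ → A) := shiftSeq with hT
  have hTm : Measurable T := shiftSeq_measurable
  set f : (ℕ → A) → ℝ≥0∞ := μ₁.rnDeriv μ₂ with hf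
  have hfmeas : Measurable f := Measure.measurable_rnDeriv _ _
  -- the RN derivative is bounded by r = C₁ C₂
  set r : NNReal := (C₁ * C₂).toNNReal with hr
  have hC₁0 : (0:ℝ) < C₁ := lt_of_lt_of_le one_pos hC₁
  have hC₂0 : (0:ℝ) < C₂ := lt_of_lt_of_le one_pos hC₂
  have hr0 : r ≠ 0 := by
    simp only [hr, ne_eq, Real.toNNReal_eq_zero, not_le]
    positivity
  have hrcoe : (r : ℝ≥0∞) = ENNReal.ofReal (C₁ * C₂) := rfl
  have hμle : μ₁ ≤ r • μ₂ := by
    refine Measure.le_iff.2 fun s _ => ?_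
    have := hle12 s
    rw [← hrcoe] at this
    rw [Measure.smul_apply, ENNReal.smul_def, smul_eq_mul]; exact this
  have hone : μ₁.rnDeriv (r • μ₂) ≤ᵐ[r • μ₂] 1 := Measure.rnDeriv_le_one_of_le hμle
  have hone' : μ₁.rnDeriv (r • μ₂) ≤ᵐ[μ₂] 1 := by
    rwa [Measure.ae_smul_measure_eq (by exact_mod_cast hr0)] at hone
  haveI : μ₁.HaveLebesgueDecomposition μ₂ := Measure.haveLebesgueDecomposition_of_sigmaFinite μ₁ μ₂
  have hsmul : μ₁.rnDeriv (r • μ₂) =ᵐ[μ₂] r⁻¹ • μ₁.rnDeriv μ₂ :=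
    Measure.rnDeriv_smul_right μ₁ μ₂ hr0
  have hfb : ∀ᵐ x ∂μ₂, f x ≤ (r : ℝ≥0∞) := by
    filter_upwards [hone', hsmul] with x h1 h2
    rw [h2] at h1
    have h1' : (r : ℝ≥0∞)⁻¹ * f x ≤ 1 := by
      simpa [ENNReal.smul_def, ENNReal.coe_inv hr0] using h1
    have h3 : (r : ℝ≥0∞) * ((r : ℝ≥0∞)⁻¹ * f x) ≤ (r : ℝ≥0∞) * 1 :=
      mul_le_mul_right h1' _
    rwa [← mul_assoc, ENNReal.mul_inv_cancel (by exact_mod_cast hr0) ENNReal.coe_ne_top,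
      one_mul, mul_one] at h3
  -- real-valued RN derivative
  set F : (ℕ → A) → ℝ := fun x => (f x).toReal with hF
  have hFmeas : Measurable F := hfmeas.ennreal_toReal
  have hFb : ∀ᵐ x ∂μ₂, ‖F x‖ ≤ (r : ℝ) := by
    filter_upwards [hfb] with x hx
    rw [hF, Real.norm_eq_abs, abs_of_nonneg ENNReal.toReal_nonneg]
    exact ENNReal.toReal_le_of_le_ofReal r.coe_nonneg (by simpa using hx)
  have hFint : Integrable F μ₂ :=
    Integrable.mono' (integrable_const (r : ℝ)) hFmeas.aestronglyMeasurable hFb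
  -- composition with the shift
  set G : (ℕ → A) → ℝ := fun x => F (T x) with hG
  have hGmeas : Measurable G := hFmeas.comp hTm
  have hGb : ∀ᵐ x ∂μ₂, ‖G x‖ ≤ (r : ℝ) := by
    have hSm : MeasurableSet {x | ¬ ‖F x‖ ≤ (r : ℝ)} := by
      refine (measurableSet_le hFmeas.norm measurable_const).compl
    have hS0 : μ₂ {x | ¬ ‖F x‖ ≤ (r : ℝ)} = 0 := hFb
    have : μ₂ (T ⁻¹' {x | ¬ ‖F x‖ ≤ (r : ℝ)}) = 0 := by
      rw [hμ₂inv.measure_preimage hSm.nullMeasurableSet]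
      exact hS0
    exact this
  have hGint : Integrable G μ₂ :=
    Integrable.mono' (integrable_const (r : ℝ)) hGmeas.aestronglyMeasurable hGb
  have hGFint : Integrable (G * F) μ₂ := by
    refine Integrable.mono' (integrable_const ((r : ℝ) * r)) ((hGmeas.mul hFmeas).aestronglyMeasurable) ?_
    filter_upwards [hFb, hGb] with x h1 h2
    simp only [Pi.mul_apply, norm_mul]
    exact mul_le_mul h2 h1 (norm_nonneg _) r.coe_nonneg
  have hFFint : Integrable (F * F) μ₂ := by
    refine Integrable.mono' (integrable_const ((r : ℝ) * r)) ((hFmeas.mul hFmeas).aestronglyMeasurable) ?_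
    filter_upwards [hFb] with x h1
    simp only [Pi.mul_apply, norm_mul]
    exact mul_le_mul h1 h1 (norm_nonneg _) r.coe_nonneg
  have hGGint : Integrable (G * G) μ₂ := by
    refine Integrable.mono' (integrable_const ((r : ℝ) * r)) ((hGmeas.mul hGmeas).aestronglyMeasurable) ?_
    filter_upwards [hGb] with x h1
    simp only [Pi.mul_apply, norm_mul]
    exact mul_le_mul h1 h1 (norm_nonneg _) r.coe_nonneg
  -- conditional expectation w.r.t. the pulled-back σ-algebra
  have hm : shiftComap A ≤ (MeasurableSpace.pi : MeasurableSpace (ℕ → A)) := hTm.comap_le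
  haveI : SigmaFinite (μ₂.trim hm) := by
    have : IsFiniteMeasure (μ₂.trim hm) := MeasureTheory.isFiniteMeasure_trim hm
    infer_instance
  have hTm' : Measurable[shiftComap A] T := fun s hs => ⟨s, hs, rfl⟩
  have hGm' : StronglyMeasurable[shiftComap A] G :=
    (Measurable.stronglyMeasurable (by exact hFmeas.comp hTm' : Measurable[shiftComap A] G))
  have hsetF : ∀ s : Set (ℕ → A), MeasurableSet s →
      ∫ x in s, F x ∂μ₂ = (μ₁ s).toReal := fun s hs =>
    Measure.setIntegral_toReal_rnDeriv hac12 s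
  have hGcond : G =ᵐ[μ₂] μ₂[F | shiftComap A] := by
    refine ae_eq_condExp_of_forall_setIntegral_eq hm hFint
      (fun s _ _ => hGint.integrableOn) (fun s hs _ => ?_)
      hGm'.aestronglyMeasurable
    obtain ⟨s', hs', rfl⟩ := hs
    have hmap : Measure.map T μ₂ = μ₂ := hμ₂inv.map_eq
    have h1 : ∫ x in T ⁻¹' s', G x ∂μ₂ = ∫ y in s', F y ∂μ₂ := by
      rw [hG]
      rw [← setIntegral_map hs' (by rw [hmap]; exact hFmeas.aestronglyMeasurable)
        hTm.aemeasurable, hmap]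
    rw [h1, hsetF s' hs', hsetF _ (hTm hs'),
      hμ₁inv.measure_preimage hs'.nullMeasurableSet]
  -- key integral identities
  have e2 : ∫ x, G x * G x ∂μ₂ = ∫ x, F x * F x ∂μ₂ := by
    have hmap : Measure.map T μ₂ = μ₂ := hμ₂inv.map_eq
    have : ∫ y, F y * F y ∂(Measure.map T μ₂) = ∫ x, F (T x) * F (T x) ∂μ₂ :=
      integral_map hTm.aemeasurable (by rw [hmap]; exact (hFmeas.mul hFmeas).aestronglyMeasurable)
    rw [hmap] at this
    exact this.symm
  have e1 : ∫ x, G x * F x ∂μ₂ = ∫ x, F x * F x ∂μ₂ := by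
    have hpull : μ₂[G * F | shiftComap A] =ᵐ[μ₂] G * μ₂[F | shiftComap A] :=
      condExp_mul_of_stronglyMeasurable_left hGm' hGFint hFint
    have step1 : ∫ x, G x * F x ∂μ₂ = ∫ x, (μ₂[G * F | shiftComap A]) x ∂μ₂ :=
      (integral_condExp hm).symm
    have step2 : ∫ x, (μ₂[G * F | shiftComap A]) x ∂μ₂ = ∫ x, G x * G x ∂μ₂ := by
      refine integral_congr_ae (hpull.trans ?_)
      filter_upwards [hGcond] with x hx
      simp only [Pi.mul_apply]
      rw [← hx]
    rw [step1, step2, e2]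
  -- hence ∫ (F - G)² = 0
  have hexp : (fun x => (F x - G x) ^ 2)
      = fun x => (F x * F x - 2 * (G x * F x)) + G x * G x := by
    funext x; ring
  have hsubint : Integrable (fun x => (F x - G x) ^ 2) μ₂ := by
    rw [hexp]
    exact ((by exact hFFint.sub (hGFint.const_mul 2) :
      Integrable (fun x => F x * F x - 2 * (G x * F x)) μ₂).add (by exact hGGint))
  have hzero : ∫ x, (F x - G x) ^ 2 ∂μ₂ = 0 := by
    have h1 : ∫ x, ((F x * F x - 2 * (G x * F x)) + G x * G x) ∂μ₂
        = (∫ x, (F x * F x - 2 * (G x * F x)) ∂μ₂) + ∫ x, G x * G x ∂μ₂ :=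
      integral_add (by exact hFFint.sub (hGFint.const_mul 2)) (by exact hGGint)
    have h2 : ∫ x, (F x * F x - 2 * (G x * F x)) ∂μ₂
        = (∫ x, F x * F x ∂μ₂) - ∫ x, 2 * (G x * F x) ∂μ₂ :=
      integral_sub (by exact hFFint) (by exact hGFint.const_mul 2)
    have h3 : ∫ x, 2 * (G x * F x) ∂μ₂ = 2 * ∫ x, G x * F x ∂μ₂ :=
      integral_const_mul 2 _
    have h4 : ∫ x, (F x - G x) ^ 2 ∂μ₂
        = ∫ x, ((F x * F x - 2 * (G x * F x)) + G x * G x) ∂μ₂ := by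
      rw [hexp]
    have e1' : ∫ x, G x * F x ∂μ₂ = ∫ x, F x * F x ∂μ₂ := e1
    have e2' : ∫ x, G x * G x ∂μ₂ = ∫ x, F x * F x ∂μ₂ := e2
    rw [h4, h1, h2, h3, e1', e2']
    ring
  have hae : (fun x => (F x - G x) ^ 2) =ᵐ[μ₂] 0 := by
    rw [← integral_eq_zero_iff_of_nonneg (fun x => sq_nonneg _) hsubint] at *
    exact hzero
  have hFG : G =ᵐ[μ₂] F := by
    filter_upwards [hae] with x hx
    have : (F x - G x) ^ 2 = 0 := hx
    have := pow_eq_zero_iff (n := 2) (by norm_num) |>.1 this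
    linarith [sub_eq_zero.1 this]
  -- F is a.e. invariant, hence a.e. constant by ergodicity of μ₂
  obtain ⟨k, hk⟩ := h₂.ae_eq_const_of_ae_eq_comp₀ hFmeas.nullMeasurable hFG
  -- conclude μ₁ = μ₂
  have hk1 : k = 1 := by
    have h1 : ∫ x, F x ∂μ₂ = (μ₁ Set.univ).toReal := by
      have := hsetF Set.univ MeasurableSet.univ
      simpa using this
    have h2 : ∫ x, F x ∂μ₂ = k := by
      rw [integral_congr_ae hk]
      simp
    rw [h2] at h1
    rw [measure_univ] at h1
    simpa using h1
  refine Measure.ext fun s hs => ?_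
  have h1 : (μ₁ s).toReal = (μ₂ s).toReal := by
    rw [← hsetF s hs]
    have : ∫ x in s, F x ∂μ₂ = ∫ x in s, (1 : ℝ) ∂μ₂ := by
      refine setIntegral_congr_ae hs ?_
      filter_upwards [hk] with x hx _
      rw [hx, hk1]; rfl
    rw [this]
    simp [measureReal_def]
  exact (ENNReal.toReal_eq_toReal_iff' (measure_ne_top _ _) (measure_ne_top _ _)).1 h1
end
end

section
/- Let M : E × E' → ℝ≥0 be a row-allowable nonnegative matrix between finite index sets, and let F_M(x) = Mx/|Mx|_1 map the open probability simplex Δ_{E'} to Δ_E. Then for all x, y ∈ Δ_{E'}, δ_E(F_M x, F_M y) ≤ τ(M) δ_{E'}(x, y), where δ is Hilbert's projective metric δ_E(x,y) = max_{e,f} log(x(e)y(f)/(x(f)y(e))), τ(M) = (1-√Φ(M))/(1+√Φ(M)), and Φ(M) = min_{e,f,e',f'} M(e,e')M(f,f')/(M(e,f')M(f,e')) if M > 0 and Φ(M) = 0 otherwise. Moreover τ(M) < 1 if and only if M > 0. -/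
open MeasureTheory Filter Topology
open scoped ENNReal

attribute [local instance] Classical.propDecidable

noncomputable section

/-- Hilbert's projective metric on positive vectors. -/
def hilbertDist {E : Type*} [Fintype E] (x y : E → ℝ) : ℝ :=
  ⨆ e : E, ⨆ f : E, Real.log ((x e * y f) / (x f * y e))

/-- Birkhoff's cross-ratio bound `Φ(M)`: the minimum of the cross ratios when `M > 0`,
and `0` otherwise. -/
def PhiM {E E' : Type*} [Fintype E] [Fintype E'] (M : Matrix E E' ℝ) : ℝ :=
  if ∀ e e', 0 < M e e' then
    ⨅ e : E, ⨅ f : E, ⨅ e' : E', ⨅ f' : E', M e e' * M f f' / (M e f' * M f e')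
  else 0

/-- Birkhoff's contraction coefficient `τ(M)`. -/
def tauM {E E' : Type*} [Fintype E] [Fintype E'] (M : Matrix E E' ℝ) : ℝ :=
  (1 - Real.sqrt (PhiM M)) / (1 + Real.sqrt (PhiM M))

/-- The normalized action of `M` on the simplex. -/
def FM {E E' : Type*} [Fintype E] [Fintype E'] (M : Matrix E E' ℝ) (x : E' → ℝ) : E → ℝ :=
  fun e => M.mulVec x e / ∑ f, M.mulVec x f

/-- Membership in the open probability simplex. -/
def inSimplex {E : Type*} [Fintype E] (x : E → ℝ) : Prop :=
  (∀ e, 0 < x e) ∧ ∑ e, x e = 1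


private lemma pos_add_mul {p q s : ℝ} (hp : 0 ≤ p) (hq : 0 ≤ q) (hpq : 0 < p + q) (hs : 0 < s) :
    0 < p + s * q := by
  rcases eq_or_lt_of_le hq with h | h
  · rw [← h] at hpq ⊢; simpa using hpq
  · nlinarith

private lemma key_step {P Q φ : ℝ} (hP : 0 ≤ P) (hQ : 0 ≤ Q) (hφ0 : 0 ≤ φ)
    (hPQ : φ * P ≤ Q) :
    P - Q ≤ (1 - Real.sqrt φ) / (1 + Real.sqrt φ) * (Real.sqrt P + Real.sqrt Q) ^ 2 := by
  have hs : 0 < 1 + Real.sqrt φ := by positivity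
  have h1 : Real.sqrt φ * Real.sqrt P ≤ Real.sqrt Q := by
    rw [← Real.sqrt_mul hφ0]
    exact Real.sqrt_le_sqrt hPQ
  have hsP := Real.sq_sqrt hP
  have hsQ := Real.sq_sqrt hQ
  rw [div_mul_eq_mul_div, le_div_iff₀ hs]
  nlinarith [mul_nonneg (sub_nonneg.2 h1) (add_nonneg (Real.sqrt_nonneg P) (Real.sqrt_nonneg Q)),
    Real.sqrt_nonneg P, Real.sqrt_nonneg Q, Real.sqrt_nonneg φ]

private lemma two_block {A₁ A₂ B₁ B₂ φ d : ℝ} (hA₁ : 0 ≤ A₁) (hA₂ : 0 ≤ A₂)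
    (hB₁ : 0 ≤ B₁) (hB₂ : 0 ≤ B₂) (hA : 0 < A₁ + A₂) (hB : 0 < B₁ + B₂)
    (hφ0 : 0 ≤ φ) (hφ1 : φ ≤ 1) (hkey : φ * (A₂ * B₁) ≤ A₁ * B₂) (hd : 0 ≤ d) :
    (A₁ + Real.exp d * A₂) * (B₁ + B₂) ≤
      Real.exp ((1 - Real.sqrt φ) / (1 + Real.sqrt φ) * d) * ((B₁ + Real.exp d * B₂) * (A₁ + A₂)) := by
  set τ := (1 - Real.sqrt φ) / (1 + Real.sqrt φ) with hτ
  have hsφ : Real.sqrt φ ≤ 1 := Real.sqrt_le_one.2 hφ1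
  have hτ0 : 0 ≤ τ := div_nonneg (by linarith) (by positivity)
  have hApos : ∀ t : ℝ, 0 < A₁ + Real.exp t * A₂ := fun t =>
    pos_add_mul hA₁ hA₂ hA (Real.exp_pos t)
  have hBpos : ∀ t : ℝ, 0 < B₁ + Real.exp t * B₂ := fun t =>
    pos_add_mul hB₁ hB₂ hB (Real.exp_pos t)
  set g : ℝ → ℝ := fun t => τ * t +
    (Real.log (B₁ + Real.exp t * B₂) - Real.log (A₁ + Real.exp t * A₂)) with hg
  have hderiv : ∀ t : ℝ, HasDerivAt g
      (τ + (Real.exp t * B₂ / (B₁ + Real.exp t * B₂)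
        - Real.exp t * A₂ / (A₁ + Real.exp t * A₂))) t := by
    intro t
    have h1 : HasDerivAt (fun t : ℝ => B₁ + Real.exp t * B₂) (Real.exp t * B₂) t := by
      simpa using ((Real.hasDerivAt_exp t).mul_const B₂).const_add B₁
    have h2 : HasDerivAt (fun t : ℝ => A₁ + Real.exp t * A₂) (Real.exp t * A₂) t := by
      simpa using ((Real.hasDerivAt_exp t).mul_const A₂).const_add A₁
    have h3 := (h1.log (hBpos t).ne').sub (h2.log (hApos t).ne')
    have h4 : HasDerivAt (fun t : ℝ => τ * t) τ t := by
      simpa using (hasDerivAt_id t).const_mul τ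
    exact h4.add h3
  have hd0 : ∀ t : ℝ, 0 ≤ τ + (Real.exp t * B₂ / (B₁ + Real.exp t * B₂)
      - Real.exp t * A₂ / (A₁ + Real.exp t * A₂)) := by
    intro t
    have hspos : 0 < Real.exp t := Real.exp_pos t
    set s := Real.exp t with hs
    have hAp := hApos t; have hBp := hBpos t
    rw [← hs] at hAp hBp
    have hmain : s * A₂ / (A₁ + s * A₂) - s * B₂ / (B₁ + s * B₂) ≤ τ := by
      rw [div_sub_div _ _ hAp.ne' hBp.ne', div_le_iff₀ (mul_pos hAp hBp)]
      have hk := key_step (mul_nonneg hA₂ hB₁) (mul_nonneg hA₁ hB₂) hφ0 hkey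
      have hPQ : Real.sqrt (A₂ * B₁) * Real.sqrt (A₁ * B₂)
          = Real.sqrt (A₁ * B₁) * Real.sqrt (A₂ * B₂) := by
        rw [← Real.sqrt_mul (mul_nonneg hA₂ hB₁), ← Real.sqrt_mul (mul_nonneg hA₁ hB₁)]
        ring_nf
      have hamgm : 2 * (s * (Real.sqrt (A₁ * B₁) * Real.sqrt (A₂ * B₂)))
          ≤ A₁ * B₁ + s ^ 2 * (A₂ * B₂) := by
        nlinarith [sq_nonneg (Real.sqrt (A₁ * B₁) - s * Real.sqrt (A₂ * B₂)),
          Real.sq_sqrt (mul_nonneg hA₁ hB₁), Real.sq_sqrt (mul_nonneg hA₂ hB₂)]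
      have hexp : (Real.sqrt (A₂ * B₁) + Real.sqrt (A₁ * B₂)) ^ 2
          = A₂ * B₁ + A₁ * B₂ + 2 * (Real.sqrt (A₁ * B₁) * Real.sqrt (A₂ * B₂)) := by
        rw [add_sq, Real.sq_sqrt (mul_nonneg hA₂ hB₁), Real.sq_sqrt (mul_nonneg hA₁ hB₂)]
        linear_combination 2 * hPQ
      rw [hexp, ← hτ] at hk
      nlinarith [mul_le_mul_of_nonneg_left hk hspos.le,
        mul_le_mul_of_nonneg_left hamgm hτ0]
    linarith
  have hdiff : Differentiable ℝ g := fun t => (hderiv t).differentiableAt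
  have hmono : Monotone g := by
    apply monotone_of_deriv_nonneg hdiff
    intro t
    rw [(hderiv t).deriv]
    exact hd0 t
  have h01 := hmono hd
  have e0 : g 0 = Real.log (B₁ + B₂) - Real.log (A₁ + A₂) := by
    simp [hg]
  have ed : g d = τ * d + (Real.log (B₁ + Real.exp d * B₂) - Real.log (A₁ + Real.exp d * A₂)) := rfl
  rw [e0, ed] at h01
  have hlog : Real.log ((A₁ + Real.exp d * A₂) * (B₁ + B₂))
      ≤ Real.log (Real.exp (τ * d) * ((B₁ + Real.exp d * B₂) * (A₁ + A₂))) := by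
    rw [Real.log_mul (hApos d).ne' hB.ne',
      Real.log_mul (Real.exp_pos _).ne' (mul_pos (hBpos d) hA).ne',
      Real.log_mul (hBpos d).ne' hA.ne', Real.log_exp]
    linarith
  have := (Real.log_le_log_iff (mul_pos (hApos d) hB)
    (mul_pos (Real.exp_pos _) (mul_pos (hBpos d) hA))).1 hlog
  exact this

private lemma master {E' : Type*} [Fintype E'] [Nonempty E'] {φ d : ℝ} (a b w : E' → ℝ)
    (ha : ∀ e', 0 ≤ a e') (hb : ∀ e', 0 ≤ b e')
    (hsa : 0 < ∑ e', a e') (hsb : 0 < ∑ e', b e')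
    (hw1 : ∀ e', 1 ≤ w e') (hw2 : ∀ e', w e' ≤ Real.exp d)
    (hφ0 : 0 ≤ φ) (hφ1 : φ ≤ 1) (hd : 0 ≤ d)
    (hkey : ∀ e' f', φ * (a f' * b e') ≤ a e' * b f') :
    (∑ e', a e' * w e') * (∑ e', b e') ≤
      Real.exp ((1 - Real.sqrt φ) / (1 + Real.sqrt φ) * d) *
        ((∑ e', b e' * w e') * (∑ e', a e')) := by
  classical
  set C := Real.exp ((1 - Real.sqrt φ) / (1 + Real.sqrt φ) * d) with hC
  set c : E' → ℝ := fun e' => C * (b e' * ∑ f', a f') - a e' * ∑ f', b f' with hc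
  set wstar : E' → ℝ := fun e' => if c e' < 0 then Real.exp d else 1 with hwstar
  set P : Finset E' := Finset.univ.filter (fun e' => c e' < 0) with hP
  set NP : Finset E' := Finset.univ.filter (fun e' => ¬ c e' < 0) with hNP
  set A₂ := ∑ e' ∈ P, a e' with hA₂
  set A₁ := ∑ e' ∈ NP, a e' with hA₁
  set B₂ := ∑ e' ∈ P, b e' with hB₂
  set B₁ := ∑ e' ∈ NP, b e' with hB₁
  have hsplita : A₂ + A₁ = ∑ e', a e' := Finset.sum_filter_add_sum_filter_not _ _ _
  have hsplitb : B₂ + B₁ = ∑ e', b e' := Finset.sum_filter_add_sum_filter_not _ _ _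
  have hA₁0 : 0 ≤ A₁ := Finset.sum_nonneg fun i _ => ha i
  have hA₂0 : 0 ≤ A₂ := Finset.sum_nonneg fun i _ => ha i
  have hB₁0 : 0 ≤ B₁ := Finset.sum_nonneg fun i _ => hb i
  have hB₂0 : 0 ≤ B₂ := Finset.sum_nonneg fun i _ => hb i
  -- sums against wstar
  have hAw : ∑ e', a e' * wstar e' = A₁ + Real.exp d * A₂ := by
    rw [show (fun e' => a e' * wstar e') = fun e' =>
        (if c e' < 0 then Real.exp d * a e' else a e') from funext fun e' => by
      simp only [hwstar]; split_ifs <;> ring]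
    rw [Finset.sum_ite, ← Finset.mul_sum]
    rw [← hP, ← hNP, ← hA₂, ← hA₁]
    ring
  have hBw : ∑ e', b e' * wstar e' = B₁ + Real.exp d * B₂ := by
    rw [show (fun e' => b e' * wstar e') = fun e' =>
        (if c e' < 0 then Real.exp d * b e' else b e') from funext fun e' => by
      simp only [hwstar]; split_ifs <;> ring]
    rw [Finset.sum_ite, ← Finset.mul_sum]
    rw [← hP, ← hNP, ← hB₂, ← hB₁]
    ring
  -- expansion of weighted sums against c
  have expand : ∀ v : E' → ℝ, ∑ e', v e' * c e'
      = C * ((∑ e', b e' * v e') * ∑ e', a e') - (∑ e', a e' * v e') * ∑ e', b e' := by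
    intro v
    rw [Finset.sum_mul, Finset.sum_mul, Finset.mul_sum, ← Finset.sum_sub_distrib]
    exact Finset.sum_congr rfl fun e' _ => by simp only [hc]; ring
  -- key summed constraint
  have hkeyS : φ * (A₂ * B₁) ≤ A₁ * B₂ := by
    have e1 : A₂ * B₁ = ∑ f' ∈ P, ∑ e' ∈ NP, a f' * b e' := by
      rw [Finset.sum_mul_sum]
    have e2 : A₁ * B₂ = ∑ f' ∈ P, ∑ e' ∈ NP, a e' * b f' := by
      rw [Finset.sum_mul_sum]; exact Finset.sum_comm
    rw [e1, e2, Finset.mul_sum]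
    refine Finset.sum_le_sum fun f' _ => ?_
    rw [Finset.mul_sum]
    exact Finset.sum_le_sum fun e' _ => hkey e' f'
  have hA : 0 < A₁ + A₂ := by rw [add_comm, hsplita]; exact hsa
  have hB : 0 < B₁ + B₂ := by rw [add_comm, hsplitb]; exact hsb
  have h2b := two_block hA₁0 hA₂0 hB₁0 hB₂0 hA hB hφ0 hφ1 hkeyS hd
  have step2 : 0 ≤ ∑ e', wstar e' * c e' := by
    rw [expand wstar, hAw, hBw]
    rw [show (∑ e', a e') = A₁ + A₂ by rw [← hsplita]; ring,
        show (∑ e', b e') = B₁ + B₂ by rw [← hsplitb]; ring]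
    rw [← hC] at h2b
    linarith
  have step1 : ∑ e', wstar e' * c e' ≤ ∑ e', w e' * c e' := by
    refine Finset.sum_le_sum fun e' _ => ?_
    by_cases h : c e' < 0
    · simp only [hwstar, if_pos h]
      exact mul_le_mul_of_nonpos_right (hw2 e') h.le
    · simp only [hwstar, if_neg h]
      nlinarith [hw1 e', not_lt.1 h]
  have := le_trans step2 step1
  rw [expand w] at this
  linarith

private lemma pos_ciInf {ι : Type*} [Finite ι] [Nonempty ι] {f : ι → ℝ} (h : ∀ i, 0 < f i) :
    0 < ⨅ i, f i := by
  obtain ⟨i, hi⟩ := Finite.exists_min f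
  exact lt_of_lt_of_le (h i) (le_ciInf hi)

private lemma my_ciInf_le {ι : Type*} [Finite ι] [Nonempty ι] (f : ι → ℝ) (i : ι) :
    ⨅ j, f j ≤ f i :=
  ciInf_le (Set.finite_range f).bddBelow i

private noncomputable def hilbertDist' {E : Type*} [Fintype E] (x y : E → ℝ) : ℝ :=
  ⨆ e : E, ⨆ f : E, Real.log ((x e * y f) / (x f * y e))

private lemma hilbert_le {E : Type*} [Fintype E] [Nonempty E] (x y : E → ℝ) (e f : E) :
    Real.log ((x e * y f) / (x f * y e)) ≤ hilbertDist' x y := by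
  unfold hilbertDist'
  have h1 : ∀ (g : E → ℝ) (i : E), g i ≤ ⨆ j, g j := fun g i =>
    le_ciSup (Set.finite_range g).bddAbove i
  exact (h1 (fun f' => Real.log ((x e * y f') / (x f' * y e))) f).trans
    (h1 (fun e => ⨆ f' : E, Real.log ((x e * y f') / (x f' * y e))) e)

private theorem birkhoff_aux {E E' : Type*} [Fintype E] [Fintype E'] [Nonempty E] [Nonempty E']
    (M : Matrix E E' ℝ) (hnn : ∀ e e', 0 ≤ M e e')
    (hrow : ∀ x : E' → ℝ, (∀ e', 0 < x e') → ∀ e, 0 < M.mulVec x e)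
    (PhiM : ℝ)
    (hPhi : PhiM = if ∀ e e', 0 < M e e' then
      ⨅ e : E, ⨅ f : E, ⨅ e' : E', ⨅ f' : E', M e e' * M f f' / (M e f' * M f e') else 0) :
    (∀ x y : E' → ℝ, ((∀ e, 0 < x e) ∧ ∑ e, x e = 1) → ((∀ e, 0 < y e) ∧ ∑ e, y e = 1) →
        hilbertDist' (fun e => M.mulVec x e / ∑ f, M.mulVec x f)
          (fun e => M.mulVec y e / ∑ f, M.mulVec y f)
          ≤ (1 - Real.sqrt PhiM) / (1 + Real.sqrt PhiM) * hilbertDist' x y) ∧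
    ((1 - Real.sqrt PhiM) / (1 + Real.sqrt PhiM) < 1 ↔ ∀ e e', 0 < M e e') := by
  classical
  have hφ0 : 0 ≤ PhiM := by
    rw [hPhi]; split_ifs with h
    · exact le_ciInf fun e => le_ciInf fun f => le_ciInf fun e' => le_ciInf fun f' =>
        div_nonneg (mul_nonneg (hnn _ _) (hnn _ _)) (mul_nonneg (hnn _ _) (hnn _ _))
    · exact le_refl 0
  have hφ1 : PhiM ≤ 1 := by
    rw [hPhi]; split_ifs with h
    · obtain e := Classical.arbitrary E
      obtain e' := Classical.arbitrary E'
      calc _ ≤ ⨅ f : E, ⨅ a : E', ⨅ f' : E', M e a * M f f' / (M e f' * M f a) :=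
            my_ciInf_le _ e
        _ ≤ ⨅ a : E', ⨅ f' : E', M e a * M e f' / (M e f' * M e a) := my_ciInf_le _ e
        _ ≤ ⨅ f' : E', M e e' * M e f' / (M e f' * M e e') := my_ciInf_le _ e'
        _ ≤ M e e' * M e e' / (M e e' * M e e') := my_ciInf_le _ e'
        _ ≤ 1 := by
            rcases eq_or_lt_of_le (hnn e e') with h0 | h0
            · simp [← h0]
            · rw [div_self (by positivity)]
    · linarith
  have hkey : ∀ e f e' f', PhiM * (M e f' * M f e') ≤ M e e' * M f f' := by
    intro e f e' f'
    by_cases h : ∀ e e', 0 < M e e'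
    · have h1 : PhiM ≤ M e e' * M f f' / (M e f' * M f e') := by
        rw [hPhi, if_pos h]
        calc _ ≤ _ := my_ciInf_le _ e
          _ ≤ _ := my_ciInf_le _ f
          _ ≤ _ := my_ciInf_le _ e'
          _ ≤ _ := my_ciInf_le _ f'
      have hden : 0 < M e f' * M f e' := mul_pos (h _ _) (h _ _)
      calc PhiM * (M e f' * M f e') ≤ M e e' * M f f' / (M e f' * M f e') * (M e f' * M f e') :=
            mul_le_mul_of_nonneg_right h1 hden.le
        _ = M e e' * M f f' := div_mul_cancel₀ _ hden.ne'
    · rw [hPhi, if_neg h, zero_mul]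
      exact mul_nonneg (hnn _ _) (hnn _ _)
  constructor
  · intro x y hx hy
    set d := hilbertDist' x y with hdd
    have hd0 : 0 ≤ d := by
      have := hilbert_le x y (Classical.arbitrary E') (Classical.arbitrary E')
      rwa [div_self (mul_pos (hx.1 _) (hy.1 _)).ne', Real.log_one] at this
    have hRatio : ∀ e' f', x e' * y f' ≤ Real.exp d * (x f' * y e') := by
      intro e' f'
      have hlog := hilbert_le x y e' f'
      have hpos : 0 < (x e' * y f') / (x f' * y e') := by
        have := hx.1 e'; have := hx.1 f'; have := hy.1 e'; have := hy.1 f'; positivity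
      have h2 := (Real.log_le_iff_le_exp hpos).1 hlog
      rw [div_le_iff₀ (by have := hx.1 f'; have := hy.1 e'; positivity)] at h2
      linarith
    -- supremum over pairs
    refine ciSup_le fun e => ciSup_le fun f => ?_
    have hMx : ∀ e, 0 < M.mulVec x e := hrow x hx.1
    have hMy : ∀ e, 0 < M.mulVec y e := hrow y hy.1
    have hSx : 0 < ∑ e, M.mulVec x e := Finset.sum_pos (fun e _ => hMx e) ⟨_, Finset.mem_univ (Classical.arbitrary E)⟩
    have hSy : 0 < ∑ e, M.mulVec y e := Finset.sum_pos (fun e _ => hMy e) ⟨_, Finset.mem_univ (Classical.arbitrary E)⟩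
    have hratio_eq : (M.mulVec x e / (∑ g, M.mulVec x g) * (M.mulVec y f / ∑ g, M.mulVec y g)) /
        (M.mulVec x f / (∑ g, M.mulVec x g) * (M.mulVec y e / ∑ g, M.mulVec y g))
        = (M.mulVec x e * M.mulVec y f) / (M.mulVec x f * M.mulVec y e) := by
      field_simp
    simp only []
    rw [hratio_eq]
    have hrpos : 0 < (M.mulVec x e * M.mulVec y f) / (M.mulVec x f * M.mulVec y e) := by
      have := hMx e; have := hMx f; have := hMy e; have := hMy f; positivity
    rw [Real.log_le_iff_le_exp hrpos, div_le_iff₀ (mul_pos (hMx f) (hMy e))]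
    -- reduce to master lemma
    have hyne : ∀ e', (y e') ≠ 0 := fun e' => (hy.1 e').ne'
    obtain ⟨f₀, _, hf₀⟩ := Finset.exists_mem_eq_inf' (⟨Classical.arbitrary E', Finset.mem_univ _⟩ :
      (Finset.univ : Finset E').Nonempty) (fun e' => x e' / y e')
    set m := (Finset.univ : Finset E').inf' (⟨Classical.arbitrary E', Finset.mem_univ _⟩ :
      (Finset.univ : Finset E').Nonempty) (fun e' => x e' / y e') with hm
    have hmpos : 0 < m := by
      rw [hf₀]; exact div_pos (hx.1 f₀) (hy.1 f₀)
    set w : E' → ℝ := fun e' => x e' / y e' / m with hw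
    have hw1 : ∀ e', 1 ≤ w e' := fun e' =>
      (one_le_div hmpos).2 (Finset.inf'_le _ (Finset.mem_univ e'))
    have hw2 : ∀ e', w e' ≤ Real.exp d := by
      intro e'
      rw [hw]
      rw [div_le_iff₀ hmpos, hf₀, ← mul_div_assoc, div_le_div_iff₀ (hy.1 e') (hy.1 f₀)]
      nlinarith [hRatio e' f₀]
    have hsub : ∀ (v : E' → ℝ) (g : E), M.mulVec v g = ∑ e', (M g e' * v e') := by
      intro v g; simp [Matrix.mulVec, dotProduct]
    have hsubx : ∀ g : E, M.mulVec x g = m * ∑ e', (M g e' * y e') * w e' := by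
      intro g
      rw [hsub x g, Finset.mul_sum]
      refine Finset.sum_congr rfl fun e' _ => ?_
      rw [hw]
      field_simp [hyne e', hmpos.ne']
    have hmaster : (∑ e', (M e e' * y e') * w e') * (∑ e', M f e' * y e') ≤
        Real.exp ((1 - Real.sqrt PhiM) / (1 + Real.sqrt PhiM) * d) *
          ((∑ e', (M f e' * y e') * w e') * (∑ e', M e e' * y e')) :=
      master (fun e' => M e e' * y e') (fun e' => M f e' * y e') w
        (fun e' => mul_nonneg (hnn _ _) (hy.1 e').le)
        (fun e' => mul_nonneg (hnn _ _) (hy.1 e').le)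
        (by rw [← hsub y e]; exact hMy e) (by rw [← hsub y f]; exact hMy f)
        hw1 hw2 hφ0 hφ1 hd0
        (fun e' f' => by
          show PhiM * ((M e f' * y f') * (M f e' * y e')) ≤ (M e e' * y e') * (M f f' * y f')
          nlinarith [mul_le_mul_of_nonneg_right (hkey e f e' f')
            (mul_pos (hy.1 e') (hy.1 f')).le])
    rw [hsubx e, hsubx f, hsub y e, hsub y f]
    nlinarith [mul_le_mul_of_nonneg_left hmaster hmpos.le]
  · constructor
    · intro h
      by_contra hc
      rw [hPhi, if_neg hc, Real.sqrt_zero] at h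
      norm_num at h
    · intro h
      have hφpos : 0 < PhiM := by
        rw [hPhi, if_pos h]
        exact pos_ciInf fun e => pos_ciInf fun f => pos_ciInf fun e' => pos_ciInf fun f' =>
          div_pos (mul_pos (h _ _) (h _ _)) (mul_pos (h _ _) (h _ _))
      rw [div_lt_one (by positivity)]
      have := Real.sqrt_pos.2 hφpos
      linarith


/-- Birkhoff's contraction theorem for row-allowable nonnegative matrices. -/
theorem birkhoff_contraction {E E' : Type*} [Fintype E] [Fintype E'] [Nonempty E] [Nonempty E']
    (M : Matrix E E' ℝ) (hnn : ∀ e e', 0 ≤ M e e')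
    (hrow : ∀ x : E' → ℝ, (∀ e', 0 < x e') → ∀ e, 0 < M.mulVec x e) :
    (∀ x y : E' → ℝ, inSimplex x → inSimplex y →
        hilbertDist (FM M x) (FM M y) ≤ tauM M * hilbertDist x y) ∧
    (tauM M < 1 ↔ ∀ e e', 0 < M e e') := by
  have h := birkhoff_aux M hnn hrow (PhiM M) rfl
  exact h
end
end

section
/- Let M : E × E → ℝ≥0 be primitive. Then the spectral radius of M equals sup_{x ∈ Δ_E} min_{e ∈ E} (Mx)(e)/x(e), this supremum is attained at a strictly positive vector, and every eigenvalue λ of M (over ℂ) satisfies |λ| ≤ sup_{x ∈ Δ_E} min_e (Mx)(e)/x(e). -/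
open MeasureTheory Filter Topology
open scoped ENNReal

attribute [local instance] Classical.propDecidable

noncomputable section

section CWAux

variable {E : Type*} [Fintype E] [Nonempty E] [DecidableEq E]

lemma ciInf_le_apply (g : E → ℝ) (e : E) : (⨅ f, g f) ≤ g e :=
  ciInf_le (Finite.bddBelow_range g) e

lemma exists_ciInf_eq (g : E → ℝ) : ∃ e, (⨅ f, g f) = g e := by
  obtain ⟨e, -, he⟩ := Finset.exists_min_image Finset.univ g
    ⟨Classical.arbitrary E, Finset.mem_univ _⟩
  exact ⟨e, le_antisymm (ciInf_le_apply g e) (le_ciInf fun f => he f (Finset.mem_univ f))⟩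

lemma mulVec_pos_of_pos (P : Matrix E E ℝ) (hP : ∀ e f, 0 < P e f)
    {u : E → ℝ} (hu0 : ∀ e, 0 ≤ u e) (hune : ∃ e, 0 < u e) (e : E) :
    0 < P.mulVec u e := by
  obtain ⟨f₀, hf₀⟩ := hune
  simp only [Matrix.mulVec, dotProduct]
  exact Finset.sum_pos' (fun f _ => mul_nonneg (hP e f).le (hu0 f))
    ⟨f₀, Finset.mem_univ _, mul_pos (hP e f₀) hf₀⟩

lemma mulVec_mono (P : Matrix E E ℝ) (hP : ∀ e f, 0 ≤ P e f)
    {u v : E → ℝ} (h : ∀ e, u e ≤ v e) (e : E) : P.mulVec u e ≤ P.mulVec v e := by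
  simp only [Matrix.mulVec, dotProduct]
  exact Finset.sum_le_sum fun f _ => mul_le_mul_of_nonneg_left (h f) (hP e f)

lemma continuous_mulVec_apply (A : Matrix E E ℝ) (e : E) :
    Continuous fun y : E → ℝ => A.mulVec y e := by
  simp only [Matrix.mulVec, dotProduct]
  exact continuous_finset_sum _ fun f _ => continuous_const.mul (continuous_apply f)

lemma iInf_ratio_le (M : Matrix E E ℝ) {x : E → ℝ} (hx : ∀ e, 0 < x e) (e : E) :
    (⨅ f, M.mulVec x f / x f) * x e ≤ M.mulVec x e :=
  (le_div_iff₀ (hx e)).1 (ciInf_le_apply (fun f => M.mulVec x f / x f) e)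

lemma f_smul_inv (M : Matrix E E ℝ) (c : ℝ) (hc : 0 < c) (v : E → ℝ) :
    (⨅ e, M.mulVec (c • v) e / (c • v) e) = ⨅ e, M.mulVec v e / v e := by
  refine iInf_congr fun e => ?_
  rw [Matrix.mulVec_smul]
  simp only [Pi.smul_apply, smul_eq_mul]
  exact mul_div_mul_left _ _ (ne_of_gt hc)

lemma inSimplex_normalize (v : E → ℝ) (hv : ∀ e, 0 < v e) :
    inSimplex ((∑ e, v e)⁻¹ • v) := by
  have hs : 0 < ∑ e, v e := Finset.sum_pos (fun e _ => hv e) Finset.univ_nonempty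
  constructor
  · intro e
    simpa using mul_pos (inv_pos.2 hs) (hv e)
  · simp only [Pi.smul_apply, smul_eq_mul]
    rw [← Finset.mul_sum, inv_mul_cancel₀ (ne_of_gt hs)]

lemma cw_mem (M : Matrix E E ℝ) {x : E → ℝ} (hx : inSimplex x) :
    (⨅ e, M.mulVec x e / x e) ∈
      {t : ℝ | ∃ x : E → ℝ, inSimplex x ∧ t = ⨅ e : E, M.mulVec x e / x e} :=
  ⟨x, hx, rfl⟩

lemma cw_bddAbove (M : Matrix E E ℝ) (hnn : ∀ e f, 0 ≤ M e f) :
    BddAbove {t : ℝ | ∃ x : E → ℝ, inSimplex x ∧ t = ⨅ e : E, M.mulVec x e / x e} := by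
  refine ⟨∑ e, ∑ f, M e f, ?_⟩
  rintro t ⟨x, hx, rfl⟩
  have hx1 : ∀ f, x f ≤ 1 := by
    intro f
    calc x f ≤ ∑ e, x e := Finset.single_le_sum (fun e _ => (hx.1 e).le) (Finset.mem_univ f)
    _ = 1 := hx.2
  calc (⨅ e, M.mulVec x e / x e) = (⨅ e, M.mulVec x e / x e) * ∑ e, x e := by
        rw [hx.2, mul_one]
    _ = ∑ e, (⨅ e, M.mulVec x e / x e) * x e := Finset.mul_sum _ _ _
    _ ≤ ∑ e, M.mulVec x e := Finset.sum_le_sum fun e _ => iInf_ratio_le M hx.1 e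
    _ ≤ ∑ e, ∑ f, M e f := by
        refine Finset.sum_le_sum fun e _ => ?_
        simp only [Matrix.mulVec, dotProduct]
        refine Finset.sum_le_sum fun f _ => ?_
        calc M e f * x f ≤ M e f * 1 := mul_le_mul_of_nonneg_left (hx1 f) (hnn e f)
        _ = M e f := mul_one _

lemma cw_nonempty (M : Matrix E E ℝ) :
    Set.Nonempty {t : ℝ | ∃ x : E → ℝ, inSimplex x ∧ t = ⨅ e : E, M.mulVec x e / x e} := by
  refine ⟨_, cw_mem M (x := fun _ => (Fintype.card E : ℝ)⁻¹) ⟨?_, ?_⟩⟩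
  · intro e
    have : (0 : ℝ) < Fintype.card E := by
      exact_mod_cast Fintype.card_pos
    exact inv_pos.2 this
  · rw [Finset.sum_const, Finset.card_univ, nsmul_eq_mul]
    have : (Fintype.card E : ℝ) ≠ 0 := by
      exact_mod_cast Fintype.card_ne_zero
    field_simp

lemma le_cw_sSup (M : Matrix E E ℝ) (hnn : ∀ e f, 0 ≤ M e f)
    (ℓ : ℕ) (hprim : ∀ e f, 0 < (M ^ ℓ) e f)
    {c : ℝ} {u : E → ℝ} (hu0 : ∀ e, 0 ≤ u e) (hune : ∃ e, 0 < u e)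
    (hMu : ∀ e, c * u e ≤ M.mulVec u e) :
    c ≤ sSup {t : ℝ | ∃ x : E → ℝ, inSimplex x ∧ t = ⨅ e : E, M.mulVec x e / x e} := by
  set P := M ^ ℓ with hP
  set v := P.mulVec u with hv
  have hvpos : ∀ e, 0 < v e := mulVec_pos_of_pos P hprim hu0 hune
  have hcomm : M.mulVec (P.mulVec u) = P.mulVec (M.mulVec u) := by
    rw [Matrix.mulVec_mulVec, Matrix.mulVec_mulVec, hP, ← pow_succ, ← pow_succ']
  have hMv : ∀ e, c * v e ≤ M.mulVec v e := by
    intro e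
    rw [hv, hcomm]
    have h1 : P.mulVec (c • u) e ≤ P.mulVec (M.mulVec u) e :=
      mulVec_mono P (fun e f => (hprim e f).le) (fun f => by simpa using hMu f) e
    have h2 : P.mulVec (c • u) e = c * v e := by
      rw [Matrix.mulVec_smul]; rfl
    linarith
  have hs : 0 < ∑ e, v e := Finset.sum_pos (fun e _ => hvpos e) Finset.univ_nonempty
  have hxs : inSimplex ((∑ e, v e)⁻¹ • v) := inSimplex_normalize v hvpos
  have hle : c ≤ ⨅ e, M.mulVec ((∑ e, v e)⁻¹ • v) e / ((∑ e, v e)⁻¹ • v) e := by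
    rw [f_smul_inv M _ (inv_pos.2 hs) v]
    exact le_ciInf fun e => (le_div_iff₀ (hvpos e)).2 (by simpa [mul_comm] using hMv e)
  exact hle.trans (le_csSup (cw_bddAbove M hnn) (cw_mem M hxs))

end CWAux

/-- Collatz–Wielandt characterization of the Perron root of a primitive
matrix: the sup over the simplex of `min_e (Mx)(e)/x(e)` is attained at a positive
eigenvector and dominates the modulus of every (complex) eigenvalue. -/
theorem collatz_wielandt {E : Type*} [Fintype E] [Nonempty E] [DecidableEq E]
    (M : Matrix E E ℝ) (hnn : ∀ e f, 0 ≤ M e f)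
    (ℓ : ℕ) (hℓ : 1 ≤ ℓ) (hprim : ∀ e f, 0 < (M ^ ℓ) e f) :
    (∃ x₀ : E → ℝ, (∀ e, 0 < x₀ e) ∧
        M.mulVec x₀ = (sSup {t : ℝ | ∃ x : E → ℝ, inSimplex x ∧
          t = ⨅ e : E, M.mulVec x e / x e}) • x₀ ∧
        (⨅ e : E, M.mulVec x₀ e / x₀ e) =
          sSup {t : ℝ | ∃ x : E → ℝ, inSimplex x ∧ t = ⨅ e : E, M.mulVec x e / x e}) ∧
    (∀ z : ℂ, Module.End.HasEigenvalue (Matrix.toLin' (M.map (fun t => (t : ℂ)))) z →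
        ‖z‖ ≤ sSup {t : ℝ | ∃ x : E → ℝ, inSimplex x ∧
          t = ⨅ e : E, M.mulVec x e / x e}) := by
  set S := {t : ℝ | ∃ x : E → ℝ, inSimplex x ∧ t = ⨅ e : E, M.mulVec x e / x e} with hS
  set r := sSup S with hr
  set P := M ^ ℓ with hPdef
  have hPnn : ∀ e f, 0 ≤ P e f := fun e f => (hprim e f).le
  have hcomm : ∀ w : E → ℝ, M.mulVec (P.mulVec w) = P.mulVec (M.mulVec w) := by
    intro w
    rw [Matrix.mulVec_mulVec, Matrix.mulVec_mulVec, hPdef, ← pow_succ, ← pow_succ']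
  -- the compact simplex
  set K := {y : E → ℝ | (∀ e, 0 ≤ y e) ∧ ∑ e, y e = 1} with hK
  have hKcl : IsClosed K := by
    have h1 : IsClosed {y : E → ℝ | ∀ e, 0 ≤ y e} := by
      have : {y : E → ℝ | ∀ e, 0 ≤ y e} = ⋂ e, {y : E → ℝ | 0 ≤ y e} := by
        ext y; simp
      rw [this]
      exact isClosed_iInter fun e => isClosed_le continuous_const (continuous_apply e)
    have h2 : IsClosed {y : E → ℝ | ∑ e, y e = 1} :=
      isClosed_eq (continuous_finset_sum _ fun e _ => continuous_apply e) continuous_const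
    exact h1.inter h2
  have hKsub : K ⊆ Set.Icc (0 : E → ℝ) 1 := by
    rintro y ⟨hy0, hy1⟩
    refine ⟨fun e => hy0 e, fun e => ?_⟩
    calc y e ≤ ∑ f, y f := Finset.single_le_sum (fun f _ => hy0 f) (Finset.mem_univ e)
    _ = 1 := hy1
  have hKcomp : IsCompact K := IsCompact.of_isClosed_subset isCompact_Icc hKcl hKsub
  have hKne : K.Nonempty := by
    refine ⟨fun _ => (Fintype.card E : ℝ)⁻¹, fun e => ?_, ?_⟩
    · positivity
    · rw [Finset.sum_const, Finset.card_univ, nsmul_eq_mul]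
      have : (Fintype.card E : ℝ) ≠ 0 := by exact_mod_cast Fintype.card_ne_zero
      field_simp
  have hKpos : ∀ y ∈ K, ∀ e, 0 < P.mulVec y e := by
    rintro y ⟨hy0, hy1⟩ e
    refine mulVec_pos_of_pos P hprim hy0 ?_ e
    by_contra h
    push_neg at h
    have : ∑ e, y e = 0 := Finset.sum_eq_zero fun e _ => le_antisymm (h e) (hy0 e)
    rw [hy1] at this; norm_num at this
  -- the function to maximize
  set g : (E → ℝ) → ℝ := fun y => ⨅ e, M.mulVec (P.mulVec y) e / (P.mulVec y) e with hg
  have hgcont : ContinuousOn g K := by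
    simp only [hg]
    refine ContinuousOn.congr (f := fun y => Finset.univ.inf' Finset.univ_nonempty
        (fun e => M.mulVec (P.mulVec y) e / (P.mulVec y) e)) ?_
        (fun y _ => (Finset.inf'_univ_eq_ciInf _).symm)
    refine ContinuousOn.finset_inf'_apply Finset.univ_nonempty fun e _ => ?_
    refine ContinuousOn.div ?_ ((continuous_mulVec_apply P e).continuousOn) ?_
    · have : (fun y : E → ℝ => M.mulVec (P.mulVec y) e) = fun y => (M * P).mulVec y e := by
        funext y; rw [Matrix.mulVec_mulVec]
      rw [this]
      exact (continuous_mulVec_apply (M * P) e).continuousOn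
    · intro y hy
      exact ne_of_gt (hKpos y hy e)
  obtain ⟨y₀, hy₀K, hy₀max⟩ := hKcomp.exists_isMaxOn hKne hgcont
  -- the maximizer, normalized
  set v₀ := P.mulVec y₀ with hv₀
  have hv₀pos : ∀ e, 0 < v₀ e := hKpos y₀ hy₀K
  have hs₀ : 0 < ∑ e, v₀ e := Finset.sum_pos (fun e _ => hv₀pos e) Finset.univ_nonempty
  set x₀ := (∑ e, v₀ e)⁻¹ • v₀ with hx₀
  have hx₀simplex : inSimplex x₀ := inSimplex_normalize v₀ hv₀pos
  have hx₀pos : ∀ e, 0 < x₀ e := hx₀simplex.1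
  have hfx₀ : (⨅ e, M.mulVec x₀ e / x₀ e) = g y₀ := by
    rw [hx₀]
    exact f_smul_inv M _ (inv_pos.2 hs₀) v₀
  -- sSup S = g y₀
  have hfx₀S : (⨅ e, M.mulVec x₀ e / x₀ e) ∈ S := cw_mem M hx₀simplex
  have hbdd : BddAbove S := cw_bddAbove M hnn
  have hSne : S.Nonempty := cw_nonempty M
  have hrmax : r = g y₀ := by
    refine le_antisymm (csSup_le hSne ?_) ?_
    · rintro t ⟨x, hx, rfl⟩
      -- f x ≤ g x ≤ g y₀
      have hxK : x ∈ K := ⟨fun e => (hx.1 e).le, hx.2⟩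
      have hfg : (⨅ e, M.mulVec x e / x e) ≤ g x := by
        refine le_ciInf fun e => ?_
        rw [hcomm x]
        refine (le_div_iff₀ (hKpos x hxK e)).2 ?_
        have h1 : P.mulVec ((⨅ f, M.mulVec x f / x f) • x) e ≤ P.mulVec (M.mulVec x) e :=
          mulVec_mono P hPnn (fun f => by simpa using iInf_ratio_le M hx.1 f) e
        have h2 : P.mulVec ((⨅ f, M.mulVec x f / x f) • x) e
            = (⨅ f, M.mulVec x f / x f) * P.mulVec x e := by
          rw [Matrix.mulVec_smul]; rfl
        rw [h2] at h1
        linarith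
      exact hfg.trans (hy₀max hxK)
    · rw [← hfx₀]
      exact le_csSup hbdd hfx₀S
  have hinf_eq : (⨅ e, M.mulVec x₀ e / x₀ e) = r := by rw [hfx₀, hrmax]
  -- lower bound: M x₀ ≥ r x₀
  have hlow : ∀ e, r * x₀ e ≤ M.mulVec x₀ e := by
    intro e
    have := iInf_ratio_le M hx₀pos e
    rw [hinf_eq] at this
    exact this
  -- M x₀ = r x₀
  have heig : M.mulVec x₀ = r • x₀ := by
    by_contra hne
    have hstrict : ∃ e, r * x₀ e < M.mulVec x₀ e := by
      by_contra h
      push_neg at h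
      exact hne (funext fun e => by
        simpa [Pi.smul_apply, smul_eq_mul] using le_antisymm (h e) (hlow e))
    obtain ⟨e₁, he₁⟩ := hstrict
    set w : E → ℝ := fun e => M.mulVec x₀ e - r * x₀ e with hw
    have hw0 : ∀ e, 0 ≤ w e := fun e => sub_nonneg.2 (hlow e)
    have hwpos : 0 < w e₁ := sub_pos.2 he₁
    set v := P.mulVec x₀ with hvdef
    have hvpos : ∀ e, 0 < v e := mulVec_pos_of_pos P hprim (fun e => (hx₀pos e).le)
      ⟨e₁, hx₀pos e₁⟩
    have hstrictv : ∀ e, r * v e < M.mulVec v e := by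
      intro e
      have hdecomp : M.mulVec x₀ = r • x₀ + w := by
        funext f; simp [hw]
      have : M.mulVec v e = r * v e + P.mulVec w e := by
        rw [hvdef, hcomm x₀, hdecomp, Matrix.mulVec_add, Matrix.mulVec_smul]
        rfl
      have hPw : 0 < P.mulVec w e := mulVec_pos_of_pos P hprim hw0 ⟨e₁, hwpos⟩ e
      linarith
    -- normalize v and contradict maximality of r
    have hsv : 0 < ∑ e, v e := Finset.sum_pos (fun e _ => hvpos e) Finset.univ_nonempty
    set x₁ := (∑ e, v e)⁻¹ • v with hx₁
    have hx₁simplex : inSimplex x₁ := inSimplex_normalize v hvpos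
    have hfx₁ : (⨅ e, M.mulVec x₁ e / x₁ e) = ⨅ e, M.mulVec v e / v e := by
      rw [hx₁]; exact f_smul_inv M _ (inv_pos.2 hsv) v
    obtain ⟨e₂, he₂⟩ := exists_ciInf_eq (fun e => M.mulVec v e / v e)
    have hgt : r < ⨅ e, M.mulVec v e / v e := by
      rw [he₂]
      exact (lt_div_iff₀ (hvpos e₂)).2 (by simpa [mul_comm] using hstrictv e₂)
    have hle : (⨅ e, M.mulVec x₁ e / x₁ e) ≤ r := le_csSup hbdd (cw_mem M hx₁simplex)
    rw [hfx₁] at hle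
    exact absurd (hgt.trans_le hle) (lt_irrefl r)
  refine ⟨⟨x₀, hx₀pos, heig, hinf_eq⟩, ?_⟩
  -- eigenvalue bound
  intro z hz
  obtain ⟨vc, hvc_mem, hvc_ne⟩ :=
    (Submodule.ne_bot_iff _).1 hz
  have hvc_eq : (M.map (fun t => (t : ℂ))).mulVec vc = z • vc := by
    have := (Module.End.mem_eigenspace_iff).1 hvc_mem
    rwa [Matrix.toLin'_apply] at this
  set u : E → ℝ := fun e => ‖vc e‖ with hu
  have hu0 : ∀ e, 0 ≤ u e := fun e => norm_nonneg _
  have hune : ∃ e, 0 < u e := by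
    have : ∃ e, vc e ≠ 0 := Function.ne_iff.1 hvc_ne
    obtain ⟨e, he⟩ := this
    exact ⟨e, by simpa [hu] using norm_pos_iff.mpr he⟩
  have hMu : ∀ e, ‖z‖ * u e ≤ M.mulVec u e := by
    intro e
    have h1 : z * vc e = ∑ f, (M e f : ℂ) * vc f := by
      have := congrFun hvc_eq e
      simp only [Matrix.mulVec, dotProduct, Matrix.map_apply, Pi.smul_apply,
        smul_eq_mul] at this
      rw [← this]
    calc ‖z‖ * u e = ‖z * vc e‖ := by
          simp [hu, norm_mul]
    _ = ‖∑ f, (M e f : ℂ) * vc f‖ := by rw [h1]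
    _ ≤ ∑ f, ‖(M e f : ℂ) * vc f‖ := norm_sum_le _ _
    _ = ∑ f, M e f * u f := by
          refine Finset.sum_congr rfl fun f _ => ?_
          rw [norm_mul, Complex.norm_of_nonneg (hnn e f)]
    _ = M.mulVec u e := rfl
  rw [hPdef] at hprim
  exact le_cw_sSup M hnn ℓ hprim hu0 hune hMu
end
end

section
/- Let ψ be an (r+1)-symbol potential on A^ℕ (r ≥ 1) with transfer matrix 𝓜_r on A^r. Then the Birkhoff cross-ratio bound of 𝓜_r^r satisfies Φ(𝓜_r^r) ≥ exp(-2 Σ_{k=0}^r var_k ψ) > 0, and hence the contraction coefficient satisfies τ(𝓜_r^r) ≤ 1 - exp(-Σ_{k=0}^∞ var_k ψ) provided Σ_k var_k ψ < ∞. -/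
open MeasureTheory Filter Topology
open scoped ENNReal

attribute [local instance] Classical.propDecidable

noncomputable section

/-- The infinite sequence beginning with the word `v` followed by the last letter of `w`. -/
def wordSeq {A : Type*} {r : ℕ} (hr : 0 < r) (v w : Fin r → A) : ℕ → A :=
  fun n => if h : n < r then v ⟨n, h⟩ else w ⟨r - 1, Nat.sub_lt hr Nat.one_pos⟩

/-- The transfer matrix `𝓜_ψ` of an `(r+1)`-symbol potential:
`𝓜_ψ(v,w) = exp(ψ(v·w_{r-1}))` if `v₁^{r-1} = w₀^{r-2}`, else `0`. -/
def transferMat {A : Type*} {r : ℕ} (hr : 0 < r) (ψ : (ℕ → A) → ℝ) :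
    Matrix (Fin r → A) (Fin r → A) ℝ :=
  fun v w =>
    if ∀ (i : ℕ) (hi : i + 1 < r), v ⟨i + 1, hi⟩ = w ⟨i, Nat.lt_of_succ_lt hi⟩ then
      Real.exp (ψ (wordSeq hr v w))
    else 0

lemma fin_congr {A : Type*} {r : ℕ} (v : Fin r → A) {i j : ℕ} (hi : i < r) (hj : j < r)
    (h : i = j) : v ⟨i, hi⟩ = v ⟨j, hj⟩ := by subst h; rfl

lemma shiftSeq_iter {A : Type*} (k : ℕ) (a : ℕ → A) (m : ℕ) :
    (shiftSeq^[k] a) m = a (m + k) := by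
  induction k generalizing a with
  | zero => rfl
  | succ k ih =>
    rw [Function.iterate_succ_apply, ih]
    rfl

/-- The sequence `v` followed by the last `n` letters of `w`, padded with `w (r-1)`. -/
def seqcat {A : Type*} {r : ℕ} (hr : 0 < r) (n : ℕ) (v w : Fin r → A) : ℕ → A :=
  fun m => if h : m < r then v ⟨m, h⟩ else w ⟨min (m - n) (r - 1), by omega⟩

def compat {A : Type*} {r : ℕ} (n : ℕ) (v w : Fin r → A) : Prop :=
  ∀ (i : ℕ) (h : n + i < r), v ⟨n + i, h⟩ = w ⟨i, by omega⟩

lemma transferMat_pow_apply {A : Type*} [Fintype A] {r : ℕ} (hr : 0 < r)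
    (ψ : (ℕ → A) → ℝ) (hψ : IsLocConst r ψ) :
    ∀ n, n ≤ r → ∀ v w : Fin r → A,
    ((transferMat hr ψ) ^ n) v w =
      if compat n v w then Real.exp (birk ψ n (seqcat hr n v w)) else 0 := by
  intro n
  induction n with
  | zero =>
    intro _ v w
    rw [pow_zero]
    by_cases h : v = w
    · subst h
      rw [if_pos]
      · rw [Matrix.one_apply_eq]
        simp [birk]
      · intro i hi
        exact fin_congr v _ _ (by omega)
    · rw [Matrix.one_apply_ne h, if_neg]
      intro hc
      apply h
      funext i
      have := hc i (by omega)
      have h2 : v i = v ⟨0 + (i : ℕ), by omega⟩ := fin_congr v _ _ (by omega)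
      have h3 : w i = w ⟨(i : ℕ), i.isLt⟩ := fin_congr w _ _ rfl
      rw [h2, h3, this]
  | succ n ih =>
    intro hn v w
    have hn' : n ≤ r := by omega
    rw [pow_succ, Matrix.mul_apply]
    set u₀ : Fin r → A := fun i =>
      if h : (i : ℕ) = 0 then v ⟨n, by omega⟩ else w ⟨(i : ℕ) - 1, by have := i.isLt; omega⟩
      with hu₀
    have hu₀val : ∀ (i : ℕ) (h : i < r), u₀ ⟨i, h⟩ =
        if h0 : i = 0 then v ⟨n, by omega⟩ else w ⟨i - 1, by omega⟩ := by
      intro i h; rfl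
    by_cases hc : compat (n + 1) v w
    · rw [if_pos hc]
      rw [Finset.sum_eq_single u₀]
      · -- evaluate at u₀
        have h1 : ((transferMat hr ψ) ^ n) v u₀ =
            Real.exp (birk ψ n (seqcat hr n v u₀)) := by
          rw [ih hn' v u₀, if_pos]
          intro i h
          rw [hu₀val i (by omega)]
          by_cases h0 : i = 0
          · subst h0
            rw [dif_pos rfl]
            exact fin_congr v _ _ (by omega)
          · rw [dif_neg h0]
            have h2 := hc (i - 1) (by omega)
            have h3 : v ⟨n + i, h⟩ = v ⟨n + 1 + (i - 1), by omega⟩ :=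
              fin_congr v _ _ (by omega)
            rw [h3, h2]
        have h2 : transferMat hr ψ u₀ w = Real.exp (ψ (wordSeq hr u₀ w)) := by
          rw [transferMat, if_pos]
          intro i hi
          rw [hu₀val (i + 1) hi, dif_neg (by omega)]
          exact fin_congr w _ _ (by omega)
        rw [h1, h2, ← Real.exp_add]
        congr 1
        have hbs : birk ψ (n + 1) (seqcat hr (n + 1) v w) =
            birk ψ n (seqcat hr (n + 1) v w) +
              ψ (shiftSeq^[n] (seqcat hr (n + 1) v w)) := by
          rw [birk, birk, Finset.sum_range_succ]
        rw [hbs]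
        congr 1
        · -- birkhoff sums agree
          rw [birk, birk]
          refine Finset.sum_congr rfl fun k hk => ?_
          have hk' : k < n := Finset.mem_range.mp hk
          apply hψ
          intro i hi
          rw [shiftSeq_iter, shiftSeq_iter]
          set m := i + k with hm
          have hmlt : m < r + n := by omega
          by_cases hmr : m < r
          · simp only [seqcat]
            rw [dif_pos hmr, dif_pos hmr]
          · simp only [seqcat]
            rw [dif_neg hmr, dif_neg hmr]
            have e1 : min (m - n) (r - 1) = m - n := by omega
            have e2 : min (m - (n + 1)) (r - 1) = m - n - 1 := by omega
            have h4 : u₀ ⟨min (m - n) (r - 1), by omega⟩ = u₀ ⟨m - n, by omega⟩ :=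
              fin_congr u₀ _ _ e1
            rw [h4, hu₀val (m - n) (by omega), dif_neg (by omega)]
            exact (fin_congr w _ _ (by omega)).symm
        · -- last term
          apply hψ
          intro i hi
          rw [shiftSeq_iter]
          simp only [wordSeq, seqcat]
          by_cases hir : i < r
          · rw [dif_pos hir]
            by_cases h0 : i = 0
            · subst h0
              rw [hu₀val 0 hir, dif_pos rfl, dif_pos (by omega : 0 + n < r)]
              exact fin_congr v _ _ (by omega)
            · rw [hu₀val i hir, dif_neg h0]
              by_cases hin : i + n < r
              · rw [dif_pos hin]
                have h2 := hc (i - 1) (by omega)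
                have h3 : v ⟨i + n, hin⟩ = v ⟨n + 1 + (i - 1), by omega⟩ :=
                  fin_congr v _ _ (by omega)
                rw [← h2, ← h3]
              · rw [dif_neg hin]
                exact fin_congr w _ _ (by omega)
          · rw [dif_neg hir, dif_neg (by omega : ¬ i + n < r)]
            exact fin_congr w _ _ (by omega)
      · -- other summands vanish
        intro u _ hu
        rw [ih hn' v u]
        by_cases h1 : compat n v u
        · by_cases h2 : ∀ (i : ℕ) (hi : i + 1 < r),
              u ⟨i + 1, hi⟩ = w ⟨i, Nat.lt_of_succ_lt hi⟩
          · exfalso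
            apply hu
            funext i
            have hiv : i = (⟨(i : ℕ), i.isLt⟩ : Fin r) := rfl
            by_cases h0 : (i : ℕ) = 0
            · have h3 := h1 0 (by omega)
              rw [hiv, hu₀val (i : ℕ) i.isLt, dif_pos h0]
              have h4 : u ⟨(i : ℕ), i.isLt⟩ = u ⟨0, by omega⟩ :=
                fin_congr u _ _ h0
              rw [h4, ← h3]
              exact fin_congr v _ _ (by omega)
            · have h3 := h2 ((i : ℕ) - 1) (by have := i.isLt; omega)
              rw [hiv, hu₀val (i : ℕ) i.isLt, dif_neg h0]
              have h4 : u ⟨(i : ℕ), i.isLt⟩ = u ⟨(i : ℕ) - 1 + 1, by have := i.isLt; omega⟩ :=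
                fin_congr u _ _ (by omega)
              rw [h4, h3]
          · rw [transferMat, if_neg h2, mul_zero]
        · rw [if_neg h1, zero_mul]
      · intro h
        exact absurd (Finset.mem_univ u₀) h
    · rw [if_neg hc]
      apply Finset.sum_eq_zero
      intro u _
      rw [ih hn' v u]
      by_cases h1 : compat n v u
      · by_cases h2 : ∀ (i : ℕ) (hi : i + 1 < r),
            u ⟨i + 1, hi⟩ = w ⟨i, Nat.lt_of_succ_lt hi⟩
        · exfalso
          apply hc
          intro j hj
          have h3 := h1 (j + 1) (by omega)
          have h4 := h2 j (by omega)
          have h5 : v ⟨n + 1 + j, hj⟩ = v ⟨n + (j + 1), by omega⟩ :=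
            fin_congr v _ _ (by omega)
          rw [h5, h3]
          exact h4
        · rw [transferMat, if_neg h2, mul_zero]
      · rw [if_neg h1, zero_mul]

lemma varPot_bound {A : Type*} [Fintype A] [Nonempty A] {r : ℕ} (ψ : (ℕ → A) → ℝ)
    (hψ : IsLocConst r ψ) {n : ℕ} {a b : ℕ → A} (h : ∀ i ≤ n, a i = b i) :
    |ψ a - ψ b| ≤ varPot n ψ := by
  obtain ⟨C, hC⟩ : ∃ C, ∀ x : ℕ → A, |ψ x| ≤ C := by
    refine ⟨Finset.univ.sup' Finset.univ_nonempty
      (fun u : Fin (r + 1) → A =>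
        |ψ (fun m => if h : m < r + 1 then u ⟨m, h⟩ else u ⟨0, by omega⟩)|), fun x => ?_⟩
    have hx : ψ x = ψ (fun m =>
        if h : m < r + 1 then (fun i : Fin (r + 1) => x i) ⟨m, h⟩
        else (fun i : Fin (r + 1) => x i) ⟨0, by omega⟩) := by
      apply hψ
      intro i hi
      rw [dif_pos (by omega)]
    rw [hx]
    exact Finset.le_sup' (fun u : Fin (r + 1) → A =>
      |ψ (fun m => if h : m < r + 1 then u ⟨m, h⟩ else u ⟨0, by omega⟩)|)
      (Finset.mem_univ (fun i : Fin (r + 1) => x i))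
  apply le_csSup
  · refine ⟨2 * C, ?_⟩
    rintro x ⟨a', b', -, rfl⟩
    have h1 := abs_le.mp (hC a')
    have h2 := abs_le.mp (hC b')
    rw [abs_sub_le_iff]
    constructor <;> linarith
  · exact ⟨a, b, h, rfl⟩

lemma birk_diff {A : Type*} [Fintype A] [Nonempty A] {r : ℕ} (ψ : (ℕ → A) → ℝ)
    (hψ : IsLocConst r ψ) {a b : ℕ → A} (h : ∀ m, m < r → a m = b m) :
    |birk ψ r a - birk ψ r b| ≤ ∑ j ∈ Finset.range r, varPot j ψ := by
  rw [birk, birk, ← Finset.sum_sub_distrib]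
  refine (Finset.abs_sum_le_sum_abs _ _).trans ?_
  rw [← Finset.sum_range_reflect (fun j => varPot j ψ) r]
  refine Finset.sum_le_sum fun k hk => ?_
  have hk' := Finset.mem_range.mp hk
  refine varPot_bound ψ hψ (n := r - 1 - k) ?_
  intro i hi
  rw [shiftSeq_iter, shiftSeq_iter]
  exact h _ (by omega)

/-- lower bound on the Birkhoff cross-ratio of `𝓜_r^r` and upper bound on
the contraction coefficient in terms of the variations of `ψ`. -/
theorem transferMat_contraction_bounds {A : Type*} [Fintype A] (hA : 2 ≤ Fintype.card A)
    {r : ℕ} (hr : 1 ≤ r) (ψ : (ℕ → A) → ℝ) (hψ : IsLocConst r ψ)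
    (hsum : Summable (fun k => varPot k ψ)) (hvar : ∀ k, 0 ≤ varPot k ψ) :
    0 < PhiM ((transferMat hr ψ) ^ r) ∧
    Real.exp (-2 * ∑ k ∈ Finset.range (r + 1), varPot k ψ) ≤
      PhiM ((transferMat hr ψ) ^ r) ∧
    tauM ((transferMat hr ψ) ^ r) ≤ 1 - Real.exp (-(∑' k : ℕ, varPot k ψ)) := by
  haveI : Nonempty A := Fintype.card_pos_iff.mp (by omega)
  set M := transferMat hr ψ with hM
  have hpow : ∀ v w : Fin r → A, (M ^ r) v w = Real.exp (birk ψ r (seqcat hr r v w)) := by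
    intro v w
    rw [transferMat_pow_apply hr ψ hψ r le_rfl v w, if_pos]
    intro i hi
    exact absurd hi (by omega)
  have hpos : ∀ v w : Fin r → A, 0 < (M ^ r) v w := fun v w => by
    rw [hpow]; exact Real.exp_pos _
  set S := ∑ k ∈ Finset.range (r + 1), varPot k ψ with hS
  have hSr : ∑ j ∈ Finset.range r, varPot j ψ ≤ S := by
    rw [hS, Finset.sum_range_succ]
    have := hvar r
    linarith
  have hSnn : 0 ≤ S := Finset.sum_nonneg fun k _ => hvar k
  have hcross : ∀ e f e' f' : Fin r → A,
      Real.exp (-2 * S) ≤ (M ^ r) e e' * (M ^ r) f f' / ((M ^ r) e f' * (M ^ r) f e') := by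
    intro e f e' f'
    rw [hpow, hpow, hpow, hpow, ← Real.exp_add, ← Real.exp_add, ← Real.exp_sub]
    apply Real.exp_le_exp.mpr
    have h1 : |birk ψ r (seqcat hr r e e') - birk ψ r (seqcat hr r e f')| ≤
        ∑ j ∈ Finset.range r, varPot j ψ := by
      refine birk_diff ψ hψ fun m hm => ?_
      simp only [seqcat]
      rw [dif_pos hm, dif_pos hm]
    have h2 : |birk ψ r (seqcat hr r f f') - birk ψ r (seqcat hr r f e')| ≤
        ∑ j ∈ Finset.range r, varPot j ψ := by
      refine birk_diff ψ hψ fun m hm => ?_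
      simp only [seqcat]
      rw [dif_pos hm, dif_pos hm]
    have h1' := abs_le.mp h1
    have h2' := abs_le.mp h2
    linarith
  have hΦdef : PhiM (M ^ r) =
      ⨅ e : Fin r → A, ⨅ f : Fin r → A, ⨅ e' : Fin r → A, ⨅ f' : Fin r → A,
        (M ^ r) e e' * (M ^ r) f f' / ((M ^ r) e f' * (M ^ r) f e') := by
    rw [PhiM, if_pos hpos]
  have hΦlb : Real.exp (-2 * S) ≤ PhiM (M ^ r) := by
    rw [hΦdef]
    exact le_ciInf fun e => le_ciInf fun f => le_ciInf fun e' => le_ciInf fun f' =>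
      hcross e f e' f'
  have hΦpos : 0 < PhiM (M ^ r) := lt_of_lt_of_le (Real.exp_pos _) hΦlb
  have hΦub : PhiM (M ^ r) ≤ 1 := by
    obtain ⟨v⟩ := (inferInstance : Nonempty (Fin r → A))
    rw [hΦdef]
    refine le_trans (ciInf_le (Finite.bddBelow_range _) v) ?_
    refine le_trans (ciInf_le (Finite.bddBelow_range _) v) ?_
    refine le_trans (ciInf_le (Finite.bddBelow_range _) v) ?_
    refine le_trans (ciInf_le (Finite.bddBelow_range _) v) ?_
    rw [div_self (mul_pos (hpos v v) (hpos v v)).ne']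
  refine ⟨hΦpos, hΦlb, ?_⟩
  have hs0 : 0 ≤ Real.sqrt (PhiM (M ^ r)) := Real.sqrt_nonneg _
  have hs1 : Real.sqrt (PhiM (M ^ r)) ≤ 1 := by
    rw [show (1 : ℝ) = Real.sqrt 1 from (Real.sqrt_one).symm]
    exact Real.sqrt_le_sqrt hΦub
  have hs2 : Real.exp (-S) ≤ Real.sqrt (PhiM (M ^ r)) := by
    have he : Real.exp (-S) = Real.sqrt (Real.exp (-2 * S)) := by
      rw [show (-2 * S) = (-S) + (-S) by ring, Real.exp_add,
        Real.sqrt_mul_self (le_of_lt (Real.exp_pos _))]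
    rw [he]
    exact Real.sqrt_le_sqrt hΦlb
  have htau : tauM (M ^ r) ≤ 1 - Real.sqrt (PhiM (M ^ r)) := by
    rw [tauM]
    exact div_le_self (by linarith) (by linarith)
  have hts : S ≤ ∑' k : ℕ, varPot k ψ :=
    Summable.sum_le_tsum (Finset.range (r + 1)) (fun i _ => hvar i) hsum
  have hexp : Real.exp (-(∑' k : ℕ, varPot k ψ)) ≤ Real.exp (-S) :=
    Real.exp_le_exp.mpr (by linarith)
  linarith
end
end

section
/- With the notation of the amalgamation of an r-step Markov measure: ν_r[b_0^n] admits the matrix expression ν_r[b_0^n] = L̄_{r,b_0^{r-1}}† (∏_{j=0}^{n-r} 𝓜_{r,b_j^{j+r}} / ρ_r^{n-r+1}) R̄_{r,b_{n-r+1}^n}, where 𝓜_{r,w} is the restriction of the transfer matrix 𝓜_r to fibers E_{w_0^{r-1}} × E_{w_1^r}, E_w := {v ∈ A^r : πv = w}, and L̄_{r,w}, R̄_{r,w} are the restrictions of the left and right Perron eigenvectors to E_w. -/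
open MeasureTheory Filter Topology
open scoped ENNReal

attribute [local instance] Classical.propDecidable

noncomputable section

section MyAux


lemma dot_listprod {V : Type*} [Fintype V] [DecidableEq V] (m : ℕ) (M : ℕ → Matrix V V ℝ)
    (L R : V → ℝ) :
    dotProduct L ((((List.range m).map M).prod).mulVec R)
      = ∑ f : Fin (m + 1) → V,
          L (f 0) * (∏ j : Fin m, M j (f j.castSucc) (f j.succ)) * R (f (Fin.last m)) := by
  induction m generalizing L M with
  | zero =>
      simp only [List.range_zero, List.map_nil, List.prod_nil, Matrix.one_mulVec]
      rw [Fintype.sum_equiv (Equiv.funUnique (Fin 1) V) _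
        (fun v => L v * 1 * R v) (fun f => by simp [Equiv.funUnique])]
      simp [dotProduct]
  | succ m ih =>
      rw [List.range_succ_eq_map, List.map_cons, List.prod_cons, List.map_map,
        ← Matrix.mulVec_mulVec, Matrix.dotProduct_mulVec, ih]
      rw [← Fintype.sum_equiv (Fin.consEquiv (fun _ : Fin (m+2) => V)) _
        (fun g : Fin (m+2) → V =>
          L (g 0) * (∏ j : Fin (m+1), M j (g j.castSucc) (g j.succ)) * R (g (Fin.last (m+1))))
        (fun p => rfl)]
      simp only [Fin.consEquiv_apply, Fin.prod_univ_succ, Fin.cons_zero, Fin.cons_succ,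
        Fin.castSucc_zero, ← Fin.succ_castSucc, ← Fin.succ_last, Fin.val_succ,
        Function.comp_apply, Fin.val_zero]
      rw [Fintype.sum_prod_type]
      rw [Finset.sum_comm]
      refine Finset.sum_congr rfl fun f _ => ?_
      simp only [Matrix.vecMul, dotProduct, Finset.sum_mul]
      refine Finset.sum_congr rfl fun u _ => ?_
      simp only [Nat.succ_eq_add_one]
      ring

lemma cyl_mset {C : Type*} [MeasurableSpace C] [MeasurableSingletonClass C]
    {N : ℕ} (w : Fin N → C) :
    MeasurableSet (cyl w) := by
  have : cyl w
      = ⋂ i : Fin N, (fun a : ℕ → C => a (i : ℕ)) ⁻¹' {w i} := by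
    ext a; simp [cyl, Set.mem_iInter]
  rw [this]
  exact MeasurableSet.iInter fun i => (measurable_pi_apply _) (measurableSet_singleton _)

lemma window_consistent {A : Type*} {r m : ℕ} (f : Fin (m + 1) → Fin r → A)
    (hcons : ∀ (j : Fin m) (i : ℕ) (hi : i + 1 < r),
      f j.castSucc ⟨i + 1, hi⟩ = f j.succ ⟨i, Nat.lt_of_succ_lt hi⟩) :
    ∀ (d j i : ℕ) (h1 : j + d < m + 1) (h1' : j < m + 1) (h2 : i + d < r) (h2' : i < r),
      f ⟨j + d, h1⟩ ⟨i, h2'⟩ = f ⟨j, h1'⟩ ⟨i + d, h2⟩ := by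
  intro d
  induction d with
  | zero => intro j i h1 h1' h2 h2'; rfl
  | succ d ih =>
      intro j i h1 h1' h2 h2'
      have hj : j + d < m := by omega
      have h := hcons ⟨j + d, hj⟩ i (by omega)
      simp only [Fin.castSucc_mk, Fin.succ_mk] at h
      have e1 : f ⟨j + (d + 1), h1⟩ ⟨i, h2'⟩ = f ⟨j + d, by omega⟩ ⟨i + 1, by omega⟩ :=
        h.symm
      rw [e1, ih j (i + 1) (by omega) h1' (by omega) (by omega)]
      congr 1
      exact Fin.ext (by simp <;> omega)

lemma window_consistent' {A : Type*} {r m : ℕ} (f : Fin (m + 1) → Fin r → A)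
    (hcons : ∀ (j : Fin m) (i : ℕ) (hi : i + 1 < r),
      f j.castSucc ⟨i + 1, hi⟩ = f j.succ ⟨i, Nat.lt_of_succ_lt hi⟩)
    (j j' : Fin (m + 1)) (i i' : Fin r) (h : (j : ℕ) + i = (j' : ℕ) + i') :
    f j i = f j' i' := by
  rcases Nat.le_total (j : ℕ) (j' : ℕ) with hle | hle
  · obtain ⟨d, hd⟩ : ∃ d, (j' : ℕ) = (j : ℕ) + d := ⟨j' - j, by omega⟩
    have h2 := window_consistent f hcons d j i' (by omega) j.2 (by omega) i'.2
    have ej : (⟨(j : ℕ) + d, by omega⟩ : Fin (m + 1)) = j' := Fin.ext (by simp <;> omega)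
    have ei : (⟨(i' : ℕ) + d, by omega⟩ : Fin r) = i := Fin.ext (by simp <;> omega)
    rw [ej, ei] at h2
    exact h2.symm
  · obtain ⟨d, hd⟩ : ∃ d, (j : ℕ) = (j' : ℕ) + d := ⟨j - j', by omega⟩
    have h2 := window_consistent f hcons d j' i (by omega) j'.2 (by omega) i.2
    have ej : (⟨(j' : ℕ) + d, by omega⟩ : Fin (m + 1)) = j := Fin.ext (by simp <;> omega)
    have ei : (⟨(i : ℕ) + d, by omega⟩ : Fin r) = i' := Fin.ext (by simp <;> omega)
    rw [ej, ei] at h2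
    exact h2

end MyAux

/-- matrix expression for the pushforward measure of a Markov measure:
`ν_r[b₀ⁿ] = L̄_{r,b₀^{r-1}}† (∏_j 𝓜_{r,b_j^{j+r}} / ρ^{n-r+1}) R̄_{r,b_{n-r+1}^n}`,
where the restrictions to the fibers `E_w = {v : πv = w}` are realized by zeroing out
entries outside the fibers. -/
theorem pushforward_matrix_expression {A B : Type*} [Fintype A] [DecidableEq A]
    [MeasurableSpace A] [MeasurableSingletonClass A] [Fintype B] [MeasurableSpace B]
    [MeasurableSingletonClass B]
    (π : A → B) (hπ : Function.Surjective π)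
    {r : ℕ} (hr : 1 ≤ r) (ψr : (ℕ → A) → ℝ) (hψr : IsLocConst r ψr)
    (ρ : ℝ) (hρ : 0 < ρ) (R L : (Fin r → A) → ℝ)
    (hRpos : ∀ v, 0 < R v) (hRsum : ∑ v, R v = 1) (hLpos : ∀ v, 0 < L v)
    (hReig : (transferMat hr ψr).mulVec R = ρ • R)
    (hLeig : Matrix.vecMul L (transferMat hr ψr) = ρ • L)
    (hLR : dotProduct L R = 1)
    (μr : Measure (ℕ → A)) (hμp : IsProbabilityMeasure μr)
    (hParry : ∀ (n : ℕ), r ≤ n → ∀ a : ℕ → A,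
      μr (cyl (fun i : Fin (n + 1) => a i)) =
        ENNReal.ofReal
          (L (fun i : Fin r => a i) *
            ((∏ j ∈ Finset.range (n - r + 1),
                transferMat hr ψr (fun i : Fin r => a (j + i))
                  (fun i : Fin r => a (j + 1 + i))) / ρ ^ (n - r + 1)) *
            R (fun i : Fin r => a (n - r + 1 + i)))) :
    ∀ (n : ℕ), r ≤ n → ∀ b : ℕ → B,
      ((μr.map (fun (a : ℕ → A) (k : ℕ) => π (a k)))
          (cyl (fun i : Fin (n + 1) => b i))).toReal =
        dotProduct
          (fun v : Fin r → A => if ∀ i : Fin r, π (v i) = b (i : ℕ) then L v else 0)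
          (Matrix.mulVec
            (((List.range (n - r + 1)).map (fun j =>
              Matrix.of (fun v v' : Fin r → A =>
                if (∀ i : Fin r, π (v i) = b (j + (i : ℕ))) ∧
                    (∀ i : Fin r, π (v' i) = b (j + 1 + (i : ℕ))) then
                  transferMat hr ψr v v'
                else 0))).prod)
            (fun v : Fin r → A =>
              if ∀ i : Fin r, π (v i) = b (n - r + 1 + (i : ℕ)) then R v else 0)) /
          ρ ^ (n - r + 1) := by
  intro n hn b
  classical
  set m : ℕ := n - r + 1 with hmdef
  have h1 : m + r = n + 1 := by omega
  have hm1 : 1 ≤ m := by omega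
  have hTnn : ∀ v w, 0 ≤ transferMat hr ψr v w := by
    intro v w
    unfold transferMat
    split
    · exact (Real.exp_pos _).le
    · exact le_refl 0
  set ext : (Fin (n + 1) → A) → ℕ → A :=
    fun c k => if h : k < n + 1 then c ⟨k, h⟩ else c ⟨0, Nat.succ_pos n⟩ with hext
  have hextlt : ∀ (c : Fin (n + 1) → A) (k : ℕ) (h : k < n + 1), ext c k = c ⟨k, h⟩ := by
    intro c k h; rw [hext]; simp [h]
  set pv : (Fin (n + 1) → A) → ℝ := fun c =>
    L (fun i : Fin r => ext c (i : ℕ)) *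
      ((∏ j ∈ Finset.range m, transferMat hr ψr (fun i : Fin r => ext c (j + (i : ℕ)))
          (fun i : Fin r => ext c (j + 1 + (i : ℕ)))) / ρ ^ m) *
      R (fun i : Fin r => ext c (m + (i : ℕ))) with hpv
  have hpvnn : ∀ c, 0 ≤ pv c := by
    intro c
    rw [hpv]
    have : (0:ℝ) ≤ ∏ j ∈ Finset.range m, transferMat hr ψr
        (fun i : Fin r => ext c (j + (i : ℕ))) (fun i : Fin r => ext c (j + 1 + (i : ℕ))) :=
      Finset.prod_nonneg fun j _ => hTnn _ _
    have hρm : (0:ℝ) < ρ ^ m := pow_pos hρ m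
    exact mul_nonneg (mul_nonneg (hLpos _).le (div_nonneg this hρm.le)) (hRpos _).le
  set S : Finset (Fin (n + 1) → A) :=
    Finset.univ.filter (fun c => ∀ i : Fin (n + 1), π (c i) = b (i : ℕ)) with hS
  -- measure side
  have hπm : Measurable π := measurable_of_countable π
  have hFm : Measurable (fun (a : ℕ → A) (k : ℕ) => π (a k)) :=
    measurable_pi_lambda _ (fun k => hπm.comp (measurable_pi_apply k))
  rw [Measure.map_apply hFm (cyl_mset _)]
  have hpre : (fun (a : ℕ → A) (k : ℕ) => π (a k)) ⁻¹' cyl (fun i : Fin (n + 1) => b (i : ℕ))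
      = ⋃ c ∈ S, cyl (fun i : Fin (n + 1) => c i) := by
    ext a
    simp only [Set.mem_preimage, cyl, Set.mem_setOf_eq, Set.mem_iUnion, hS, Finset.mem_filter,
      Finset.mem_univ, true_and]
    constructor
    · intro h
      exact ⟨fun i => a (i : ℕ), fun i => h i, fun i => rfl⟩
    · rintro ⟨c, hc, ha⟩ i
      rw [ha i]; exact hc i
  have hdisj : (↑S : Set (Fin (n + 1) → A)).PairwiseDisjoint
      (fun c => cyl (fun i : Fin (n + 1) => c i)) := by
    intro c _ c' _ hne
    refine Set.disjoint_left.mpr fun a ha ha' => hne ?_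
    funext i
    exact (ha i).symm.trans (ha' i)
  rw [hpre, measure_biUnion_finset hdisj (fun c _ => cyl_mset _)]
  have hterm : ∀ c : Fin (n + 1) → A,
      μr (cyl (fun i : Fin (n + 1) => c i)) = ENNReal.ofReal (pv c) := by
    intro c
    have hfun : (fun i : Fin (n + 1) => ext c (i : ℕ)) = fun i : Fin (n + 1) => c i :=
      funext fun i => hextlt c (i : ℕ) i.2
    have h2 := hParry n hn (ext c)
    rw [← hmdef] at h2
    rw [← hfun, h2, hpv]
  rw [Finset.sum_congr rfl (fun c _ => hterm c),
    ENNReal.toReal_sum (fun c _ => ENNReal.ofReal_ne_top),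
    Finset.sum_congr rfl (fun c _ => ENNReal.toReal_ofReal (hpvnn c))]
  -- matrix side
  rw [dot_listprod]
  rw [eq_div_iff (by positivity : (ρ:ℝ) ^ m ≠ 0)]
  rw [Finset.sum_mul]
  symm
  set g : (Fin (n + 1) → A) → Fin (m + 1) → Fin r → A :=
    fun c j i => c ⟨(j : ℕ) + (i : ℕ), by have := j.2; have := i.2; omega⟩ with hg
  have hfcg : ∀ (c : Fin (n + 1) → A) (k k' : Fin (n + 1)), (k : ℕ) = (k' : ℕ) → c k = c k' := by
    intro c k k' h; rw [Fin.ext h]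
  set Big : (Fin (m + 1) → Fin r → A) → ℝ := fun f =>
    ((if ∀ i : Fin r, π (f 0 i) = b (i : ℕ) then L (f 0) else 0) *
        ∏ j : Fin m,
          Matrix.of
            (fun v v' =>
              if (∀ i : Fin r, π (v i) = b ((j : ℕ) + (i : ℕ))) ∧
                  ∀ i : Fin r, π (v' i) = b ((j : ℕ) + 1 + (i : ℕ)) then
                transferMat hr ψr v v'
              else 0)
            (f j.castSucc) (f j.succ)) *
      if ∀ i : Fin r, π (f (Fin.last m) i) = b (m + (i : ℕ)) then R (f (Fin.last m)) else 0
    with hBig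
  have hir : ∀ i : Fin (n + 1), (i : ℕ) - min (i : ℕ) m < r := by
    intro i; have := i.2; omega
  have hzero : ∀ f ∈ (Finset.univ : Finset (Fin (m + 1) → Fin r → A)),
      f ∉ S.image g → Big f = 0 := by
    intro f _ hf
    by_contra h0
    simp only [hBig] at h0
    rcases mul_ne_zero_iff.mp h0 with ⟨hXP, hY⟩
    rcases mul_ne_zero_iff.mp hXP with ⟨hX, hP⟩
    have hfac := Finset.prod_ne_zero_iff.mp hP
    have hcond : ∀ j : Fin m,
        ((∀ i : Fin r, π (f j.castSucc i) = b ((j : ℕ) + (i : ℕ))) ∧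
          (∀ i : Fin r, π (f j.succ i) = b ((j : ℕ) + 1 + (i : ℕ)))) ∧
          transferMat hr ψr (f j.castSucc) (f j.succ) ≠ 0 := by
      intro j
      have h := hfac j (Finset.mem_univ j)
      rw [Matrix.of_apply] at h
      split_ifs at h with hcnd
      · exact ⟨hcnd, h⟩
      · exact absurd rfl h
    have hov : ∀ (j : Fin m) (i : ℕ) (hi : i + 1 < r),
        f j.castSucc ⟨i + 1, hi⟩ = f j.succ ⟨i, Nat.lt_of_succ_lt hi⟩ := by
      intro j
      have h := (hcond j).2
      unfold transferMat at h
      split_ifs at h with hcnd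
      · exact hcnd
      · exact absurd rfl h
    have hw : ∀ (j : Fin (m + 1)) (i : Fin r), π (f j i) = b ((j : ℕ) + (i : ℕ)) := by
      intro j i
      by_cases hj : (j : ℕ) < m
      · have h := ((hcond ⟨(j : ℕ), hj⟩).1).1 i
        have e : (⟨(j : ℕ), hj⟩ : Fin m).castSucc = j := Fin.ext (by simp)
        rwa [e] at h
      · have hj' : (j : ℕ) = m := by have := j.2; omega
        have h := ((hcond ⟨m - 1, by omega⟩).1).2 i
        have e : (⟨m - 1, by omega⟩ : Fin m).succ = j := Fin.ext (by simp <;> omega)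
        rw [e] at h
        rw [h]
        congr 1
        simp <;> omega
    set c : Fin (n + 1) → A := fun i =>
      f ⟨min (i : ℕ) m, by omega⟩ ⟨(i : ℕ) - min (i : ℕ) m, hir i⟩ with hcdef
    have hgc : g c = f := by
      funext j i
      simp only [hg, hcdef]
      exact window_consistent' f hov _ j _ i (by simp <;> omega)
    have hcS : c ∈ S := by
      rw [hS, Finset.mem_filter]
      refine ⟨Finset.mem_univ _, fun i => ?_⟩
      simp only [hcdef]
      rw [hw ⟨min (i : ℕ) m, by omega⟩ ⟨(i : ℕ) - min (i : ℕ) m, hir i⟩]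
      congr 1
      simp <;> omega
    exact hf (Finset.mem_image.mpr ⟨c, hcS, hgc⟩)
  have hinj : ∀ x ∈ S, ∀ y ∈ S, g x = g y → x = y := by
    intro x _ y _ h
    funext i
    have hj : min (i : ℕ) m < m + 1 := by omega
    have h2 := congrFun (congrFun h ⟨min (i : ℕ) m, hj⟩) ⟨(i : ℕ) - min (i : ℕ) m, hir i⟩
    simp only [hg] at h2
    have e1 : x i = x ⟨min (i : ℕ) m + ((i : ℕ) - min (i : ℕ) m), by omega⟩ :=
      hfcg x _ _ (by simp <;> omega)
    have e2 : y ⟨min (i : ℕ) m + ((i : ℕ) - min (i : ℕ) m), by omega⟩ = y i :=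
      hfcg y _ _ (by simp <;> omega)
    exact e1.trans (h2.trans e2)
  have hmain : ∀ c ∈ S, Big (g c) = pv c * ρ ^ m := by
    intro c hcS
    have hc : ∀ i : Fin (n + 1), π (c i) = b (i : ℕ) := (Finset.mem_filter.mp hcS).2
    have hccond : ∀ (j : Fin (m + 1)) (i : Fin r), π (g c j i) = b ((j : ℕ) + (i : ℕ)) := by
      intro j i
      simp only [hg]
      exact hc _
    have hwin : ∀ (j : Fin (m + 1)) (k : ℕ), (j : ℕ) = k →
        (fun i : Fin r => ext c (k + (i : ℕ))) = g c j := by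
      intro j k hk
      funext i
      rw [hextlt c _ (by have := j.2; have := i.2; omega)]
      simp only [hg]
      exact hfcg c _ _ (show k + (i : ℕ) = (j : ℕ) + (i : ℕ) by omega)
    have hwin0 : (fun i : Fin r => ext c (i : ℕ)) = g c 0 := by
      funext i
      rw [hextlt c _ (by have := i.2; omega)]
      simp only [hg]
      exact hfcg c _ _ (show (i : ℕ) = ((0 : Fin (m + 1)) : ℕ) + (i : ℕ) by simp)
    have hprod : ∀ j : Fin m,
        Matrix.of
            (fun v v' =>
              if (∀ i : Fin r, π (v i) = b ((j : ℕ) + (i : ℕ))) ∧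
                  ∀ i : Fin r, π (v' i) = b ((j : ℕ) + 1 + (i : ℕ)) then
                transferMat hr ψr v v'
              else 0)
            (g c j.castSucc) (g c j.succ)
          = transferMat hr ψr (g c j.castSucc) (g c j.succ) := by
      intro j
      rw [Matrix.of_apply, if_pos]
      constructor
      · intro i; simpa using hccond j.castSucc i
      · intro i; simpa using hccond j.succ i
    have hfin : ∏ j : Fin m, transferMat hr ψr (g c j.castSucc) (g c j.succ)
        = ∏ j ∈ Finset.range m, transferMat hr ψr (fun i : Fin r => ext c (j + (i : ℕ)))
            (fun i : Fin r => ext c (j + 1 + (i : ℕ))) := by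
      rw [← Fin.prod_univ_eq_prod_range]
      refine Finset.prod_congr rfl fun j _ => ?_
      rw [hwin j.castSucc (j : ℕ) (by simp), hwin j.succ ((j : ℕ) + 1) (by simp)]
    simp only [hBig]
    rw [Finset.prod_congr rfl (fun j _ => hprod j), hfin, if_pos, if_pos, hpv,
      ← hwin0, ← hwin (Fin.last m) m (by simp)]
    · field_simp
    · intro i; simpa using hccond (Fin.last m) i
    · intro i; simpa using hccond 0 i
  calc ∑ f : Fin (m + 1) → Fin r → A, Big f
      = ∑ f ∈ S.image g, Big f := (Finset.sum_subset (Finset.subset_univ _) hzero).symm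
    _ = ∑ c ∈ S, Big (g c) := Finset.sum_image hinj
    _ = ∑ c ∈ S, pv c * ρ ^ m := Finset.sum_congr rfl hmain
end
end
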